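/- Suppose (f_j^R, f_j^I) satisfy condition H1 with constants λ_j^{RR}, λ_j^{RI}, λ_j^{IR}, λ_j^{II} and (g_j^R, g_j^I) satisfy condition H2 with constants μ_j^{RR}, μ_j^{RI}, μ_j^{IR}, μ_j^{II}, for j = 1,…,n. Suppose there exist positive reals ξ_1,…,ξ_n, φ_1,…,φ_n and ε > 0 such that for every j = 1,…,n both: (i) ξ_j(−d_j + ε + (a_{jj}^R)⁺λ_j^{RR} + (−a_{jj}^I)⁺λ_j^{IR}) + Σ_{k≠j} ξ_k|a_{jk}^R|λ_k^{RR} + Σ_{k=1}^n φ_k|a_{jk}^R|λ_k^{RI} + Σ_{k≠j} ξ_k|a_{jk}^I|λ_k^{IR} + Σ_{k=1}^n φ_k|a_{jk}^I|λ_k^{II} + Σ_{k=1}^n (ξ_k|b_{jk}^R|μ_k^{RR} + φ_k|b_{jk}^R|μ_k^{RI} + ξ_k|b_{jk}^I|μ_k^{IR} + φ_k|b_{jk}^I|μ_k^{II}) e^{ε τ_{jk}} ≤ 0, and (ii) φ_j(−d_j + ε + (a_{jj}^R)⁺λ_j^{II} + (a_{jj}^I)⁺λ_j^{RI}) + Σ_{k=1}^n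 ξ_k|a_{jk}^R|λ_k^{IR} + Σ_{k≠j} φ_k|a_{jk}^R|λ_k^{II} + Σ_{k=1}^n ξ_k|a_{jk}^I|λ_k^{RR} + Σ_{k≠j} φ_k|a_{jk}^I|λ_k^{RI} + Σ_{k=1}^n (ξ_k|b_{jk}^R|μ_k^{IR} + φ_k|b_{jk}^R|μ_k^{II} + ξ_k|b_{jk}^I|μ_k^{RR} + φ_k|b_{jk}^I|μ_k^{RI}) e^{ε τ_{jk}} ≤ 0. If the network admits at least one solution, then it has exactly one equilibrium Z̄ ∈ ℝ^{2n}, and for every solution Z(t) there is a constant c > 0 such that ‖Z(t) − Z̄‖_{ξ,∞} ≤ c e^{−εt} and ‖(d/dt)Z(t)‖_{ξ,∞} ≤ c e^{−εt} for all t ≥ 0. -/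

import Mathlib

open Finset

/-- A solution of the delayed complex-valued network, decomposed into real and
imaginary parts. -/
def IsSolution (n : ℕ) (d : Fin n → ℝ)
    (aR aI bR bI τ : Fin n → Fin n → ℝ)
    (uR uI : Fin n → ℝ)
    (fR fI gR gI : Fin n → ℝ → ℝ → ℝ)
    (zR zI : Fin n → ℝ → ℝ) : Prop :=
  (∀ j, ContDiff ℝ 1 (zR j)) ∧ (∀ j, ContDiff ℝ 1 (zI j)) ∧
  (∀ j : Fin n, ∀ t : ℝ, 0 ≤ t →
    deriv (zR j) t =
      -(d j) * zR j t
      + (∑ k, (aR j k * fR k (zR k t) (zI k t) - aI j k * fI k (zR k t) (zI k t)))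
      + (∑ k, (bR j k * gR k (zR k (t - τ j k)) (zI k (t - τ j k))
               - bI j k * gI k (zR k (t - τ j k)) (zI k (t - τ j k))))
      + uR j) ∧
  (∀ j : Fin n, ∀ t : ℝ, 0 ≤ t →
    deriv (zI j) t =
      -(d j) * zI j t
      + (∑ k, (aR j k * fI k (zR k t) (zI k t) + aI j k * fR k (zR k t) (zI k t)))
      + (∑ k, (bR j k * gI k (zR k (t - τ j k)) (zI k (t - τ j k))
               + bI j k * gR k (zR k (t - τ j k)) (zI k (t - τ j k))))
      + uI j)

/-- An equilibrium of the network: a point of ℝ^{2n} at which both right-hand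
sides vanish. -/
def IsEquilibrium (n : ℕ) (d : Fin n → ℝ)
    (aR aI bR bI : Fin n → Fin n → ℝ)
    (uR uI : Fin n → ℝ)
    (fR fI gR gI : Fin n → ℝ → ℝ → ℝ)
    (zbR zbI : Fin n → ℝ) : Prop :=
  (∀ j : Fin n,
    -(d j) * zbR j
    + (∑ k, (aR j k * fR k (zbR k) (zbI k) - aI j k * fI k (zbR k) (zbI k)))
    + (∑ k, (bR j k * gR k (zbR k) (zbI k) - bI j k * gI k (zbR k) (zbI k)))
    + uR j = 0) ∧
  (∀ j : Fin n,
    -(d j) * zbI j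
    + (∑ k, (aR j k * fI k (zbR k) (zbI k) + aI j k * fR k (zbR k) (zbI k)))
    + (∑ k, (bR j k * gI k (zbR k) (zbI k) + bI j k * gR k (zbR k) (zbI k)))
    + uI j = 0)

/-- Condition H1: continuously differentiable with positive, bounded partial
derivatives. -/
def CondH1 (f1 f2 : ℝ → ℝ → ℝ) (lRR lRI lIR lII : ℝ) : Prop :=
  ContDiff ℝ 1 (fun p : ℝ × ℝ => f1 p.1 p.2) ∧
  ContDiff ℝ 1 (fun p : ℝ × ℝ => f2 p.1 p.2) ∧
  (∀ x y : ℝ,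
    (0 < deriv (fun s => f1 s y) x ∧ deriv (fun s => f1 s y) x ≤ lRR) ∧
    (0 < deriv (fun s => f1 x s) y ∧ deriv (fun s => f1 x s) y ≤ lRI) ∧
    (0 < deriv (fun s => f2 s y) x ∧ deriv (fun s => f2 s y) x ≤ lIR) ∧
    (0 < deriv (fun s => f2 x s) y ∧ deriv (fun s => f2 x s) y ≤ lII))

/-- Condition H2: continuously differentiable with bounded partial derivatives. -/
def CondH2 (g1 g2 : ℝ → ℝ → ℝ) (mRR mRI mIR mII : ℝ) : Prop :=
  ContDiff ℝ 1 (fun p : ℝ × ℝ => g1 p.1 p.2) ∧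
  ContDiff ℝ 1 (fun p : ℝ × ℝ => g2 p.1 p.2) ∧
  (∀ x y : ℝ,
    |deriv (fun s => g1 s y) x| ≤ mRR ∧
    |deriv (fun s => g1 x s) y| ≤ mRI ∧
    |deriv (fun s => g2 s y) x| ≤ mIR ∧
    |deriv (fun s => g2 x s) y| ≤ mII)



-- from aux1.lean

lemma lip_of_deriv_bound {u : ℝ → ℝ} {L : ℝ} (hd : Differentiable ℝ u)
    (hb : ∀ x, |deriv u x| ≤ L) (a b : ℝ) : |u a - u b| ≤ L * |a - b| := by
  have hL : 0 ≤ L := le_trans (abs_nonneg _) (hb 0)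
  have hlip : LipschitzWith (Real.toNNReal L) u := by
    apply lipschitzWith_of_nnnorm_deriv_le hd
    intro x
    rw [← NNReal.coe_le_coe, coe_nnnorm, Real.norm_eq_abs, Real.coe_toNNReal _ hL]
    exact hb x
  have := hlip.dist_le_mul a b
  simpa [Real.dist_eq, Real.coe_toNNReal _ hL, hL] using this

lemma lip_core {u : ℝ → ℝ} {L : ℝ} (h : ∀ x, 0 < deriv u x ∧ deriv u x ≤ L) (a b : ℝ) :
    |u a - u b| ≤ L * |a - b| :=
  lip_of_deriv_bound (fun x => differentiableAt_of_deriv_ne_zero (ne_of_gt (h x).1))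
    (fun x => by rw [abs_of_pos (h x).1]; exact (h x).2) a b

lemma sl_core {u : ℝ → ℝ} {L c σ a b : ℝ} (h : ∀ x, 0 < deriv u x ∧ deriv u x ≤ L)
    (hσ : σ = 1 ∨ σ = -1) (hab : σ * (a - b) = |a - b|) :
    c * (σ * (u a - u b)) ≤ max c 0 * (L * |a - b|) := by
  have hmono : StrictMono u := strictMono_of_deriv_pos (fun x => (h x).1)
  have hL0 : 0 < L := lt_of_lt_of_le (h 0).1 (h 0).2
  have key1 : 0 ≤ σ * (u a - u b) := by
    rcases hσ with h1 | h1 <;> subst h1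
    · have hba : b ≤ a := by nlinarith [abs_nonneg (a - b)]
      have := hmono.monotone hba
      simpa using by linarith [hmono.monotone hba]
    · have hab2 : a ≤ b := by nlinarith [abs_nonneg (a - b)]
      have := hmono.monotone hab2
      nlinarith
  have key2 : σ * (u a - u b) ≤ L * |a - b| := by
    have h2 : |u a - u b| ≤ L * |a - b| := lip_core h a b
    calc σ * (u a - u b) ≤ |σ * (u a - u b)| := le_abs_self _
      _ = |u a - u b| := by rcases hσ with h1 | h1 <;> subst h1 <;> simp [abs_mul, abs_sub_comm]
      _ ≤ _ := h2
  rcases le_or_gt c 0 with hc | hc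
  · have h3 : c * (σ * (u a - u b)) ≤ 0 := mul_nonpos_of_nonpos_of_nonneg hc key1
    have h4 : 0 ≤ max c 0 * (L * |a - b|) :=
      mul_nonneg (le_max_right _ _) (by positivity)
    linarith
  · rw [max_eq_left hc.le]
    exact mul_le_mul_of_nonneg_left key2 hc.le

lemma lip2 {f : ℝ → ℝ → ℝ} {Lx Ly : ℝ}
    (hdx : ∀ b, Differentiable ℝ (fun s => f s b))
    (hbx : ∀ a b, |deriv (fun s => f s b) a| ≤ Lx)
    (hdy : ∀ a, Differentiable ℝ (fun s => f a s))
    (hby : ∀ a b, |deriv (fun s => f a s) b| ≤ Ly)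
    (x y x' y' : ℝ) : |f x y - f x' y'| ≤ Lx * |x - x'| + Ly * |y - y'| := by
  have h1 : |f x y - f x' y| ≤ Lx * |x - x'| :=
    lip_of_deriv_bound (hdx y) (fun a => hbx a y) x x'
  have h2 : |f x' y - f x' y'| ≤ Ly * |y - y'| :=
    lip_of_deriv_bound (hdy x') (fun b => hby x' b) y y'
  calc |f x y - f x' y'| ≤ |f x y - f x' y| + |f x' y - f x' y'| := abs_sub_le _ _ _
    _ ≤ _ := add_le_add h1 h2

lemma sl1 {f : ℝ → ℝ → ℝ} {Lx Ly c σ x y x' y' : ℝ}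
    (hfx : ∀ a b, 0 < deriv (fun s => f s b) a ∧ deriv (fun s => f s b) a ≤ Lx)
    (hfy : ∀ a b, 0 < deriv (fun s => f a s) b ∧ deriv (fun s => f a s) b ≤ Ly)
    (hσ : σ = 1 ∨ σ = -1) (hx : σ * (x - x') = |x - x'|) :
    c * (σ * (f x y - f x' y')) ≤ max c 0 * (Lx * |x - x'|) + |c| * (Ly * |y - y'|) := by
  have hA : c * (σ * (f x y - f x' y)) ≤ max c 0 * (Lx * |x - x'|) :=
    sl_core (u := fun s => f s y) (fun a => hfx a y) hσ hx
  have hB : c * (σ * (f x' y - f x' y')) ≤ |c| * (Ly * |y - y'|) := by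
    have h2 : |f x' y - f x' y'| ≤ Ly * |y - y'| := lip_core (fun b => hfy x' b) y y'
    calc c * (σ * (f x' y - f x' y')) ≤ |c * (σ * (f x' y - f x' y'))| := le_abs_self _
      _ = |c| * |f x' y - f x' y'| := by
          rcases hσ with h1 | h1 <;> subst h1 <;> simp [abs_mul, abs_sub_comm]
      _ ≤ |c| * (Ly * |y - y'|) := mul_le_mul_of_nonneg_left h2 (abs_nonneg c)
  have hsplit : f x y - f x' y' = (f x y - f x' y) + (f x' y - f x' y') := by ring
  rw [hsplit, mul_add, mul_add]
  exact add_le_add hA hB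

lemma deriv_nonneg_of_max_left {h : ℝ → ℝ} {a t h' : ℝ} (hat : a < t)
    (hd : HasDerivAt h h' t) (hmax : ∀ s, a ≤ s → s ≤ t → h s ≤ h t) : 0 ≤ h' := by
  have hs := hasDerivAt_iff_tendsto_slope.1 hd
  have hs' : Filter.Tendsto (slope h t) (nhdsWithin t (Set.Iio t)) (nhds h') :=
    hs.mono_left (nhdsWithin_mono t (fun s hs => ne_of_lt hs))
  refine ge_of_tendsto hs' ?_
  filter_upwards [Ioo_mem_nhdsLT_of_mem (Set.mem_Ioc.2 ⟨hat, le_rfl⟩)] with s hs2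
  have h1 : h s ≤ h t := hmax s hs2.1.le hs2.2.le
  have h2 : s - t < 0 := by linarith [hs2.2]
  rw [slope_def_field]
  have h3 : (0:ℝ) ≤ (h t - h s) / (t - s) := div_nonneg (by linarith) (by linarith)
  calc (0:ℝ) ≤ (h t - h s) / (t - s) := h3
    _ = (h s - h t) / (s - t) := by
        rw [div_eq_div_iff (by linarith) (by linarith)]; ring


-- from aux3.lean

lemma absle {σ : ℝ} (hσ : σ = 1 ∨ σ = -1) (z : ℝ) : σ * z ≤ |z| := by
  rcases hσ with h | h <;> subst h
  · simpa using le_abs_self z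
  · simpa using neg_le_abs z


lemma est {n : ℕ} (j : Fin n)
    (ξ φ : Fin n → ℝ) (hξ : ∀ k, 0 < ξ k) (hφ : ∀ k, 0 < φ k)
    (dj : ℝ)
    (c1 c2 e1 e2 τ : Fin n → ℝ) (hτ : ∀ k, 0 ≤ τ k)
    (f1 f2 g1 g2 : Fin n → ℝ → ℝ → ℝ)
    (l1x l1y l2x l2y m1x m1y m2x m2y : Fin n → ℝ)
    (hm : ∀ k, 0 ≤ m1x k ∧ 0 ≤ m1y k ∧ 0 ≤ m2x k ∧ 0 ≤ m2y k)
    (hf1 : ∀ k a b, (0 < deriv (fun s => f1 k s b) a ∧ deriv (fun s => f1 k s b) a ≤ l1x k)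
                 ∧ (0 < deriv (fun s => f1 k a s) b ∧ deriv (fun s => f1 k a s) b ≤ l1y k))
    (hf2 : ∀ k a b, (0 < deriv (fun s => f2 k s b) a ∧ deriv (fun s => f2 k s b) a ≤ l2x k)
                 ∧ (0 < deriv (fun s => f2 k a s) b ∧ deriv (fun s => f2 k a s) b ≤ l2y k))
    (hg1 : ∀ k x y x' y', |g1 k x y - g1 k x' y'| ≤ m1x k * |x - x'| + m1y k * |y - y'|)
    (hg2 : ∀ k x y x' y', |g2 k x y - g2 k x' y'| ≤ m2x k * |x - x'| + m2y k * |y - y'|)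
    (ε ε' : ℝ) (hε' : 0 < ε') (hεε : ε' < ε)
    (hT : ξ j * (-dj + ε + max (c1 j) 0 * l1x j + max (c2 j) 0 * l2x j)
      + (∑ k ∈ Finset.univ.erase j, ξ k * |c1 k| * l1x k)
      + (∑ k, φ k * |c1 k| * l1y k)
      + (∑ k ∈ Finset.univ.erase j, ξ k * |c2 k| * l2x k)
      + (∑ k, φ k * |c2 k| * l2y k)
      + (∑ k, (ξ k * |e1 k| * m1x k + φ k * |e1 k| * m1y k
               + ξ k * |e2 k| * m2x k + φ k * |e2 k| * m2y k) * Real.exp (ε * τ k))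
      ≤ 0)
    (X Y X' Y' Xd Yd X'd Y'd : Fin n → ℝ)
    (P : ℝ) (hP : 0 < P)
    (hX : ∀ k, |X k - X' k| ≤ ξ k * P) (hY : ∀ k, |Y k - Y' k| ≤ φ k * P)
    (hXd : ∀ k, |Xd k - X'd k| ≤ ξ k * P * Real.exp (ε' * τ k))
    (hYd : ∀ k, |Yd k - Y'd k| ≤ φ k * P * Real.exp (ε' * τ k))
    (σ : ℝ) (hσ : σ = 1 ∨ σ = -1) (hatt : σ * (X j - X' j) = ξ j * P) :
    σ * (-dj * (X j - X' j)
      + (∑ k, (c1 k * (f1 k (X k) (Y k) - f1 k (X' k) (Y' k))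
             + c2 k * (f2 k (X k) (Y k) - f2 k (X' k) (Y' k))))
      + (∑ k, (e1 k * (g1 k (Xd k) (Yd k) - g1 k (X'd k) (Y'd k))
             + e2 k * (g2 k (Xd k) (Yd k) - g2 k (X'd k) (Y'd k)))))
      + ε' * (ξ j * P) < 0 := by
  -- positivity of Lipschitz constants
  have hl1x : ∀ k, 0 < l1x k := fun k => lt_of_lt_of_le (hf1 k 0 0).1.1 (hf1 k 0 0).1.2
  have hl1y : ∀ k, 0 < l1y k := fun k => lt_of_lt_of_le (hf1 k 0 0).2.1 (hf1 k 0 0).2.2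
  have hl2x : ∀ k, 0 < l2x k := fun k => lt_of_lt_of_le (hf2 k 0 0).1.1 (hf2 k 0 0).1.2
  have hl2y : ∀ k, 0 < l2y k := fun k => lt_of_lt_of_le (hf2 k 0 0).2.1 (hf2 k 0 0).2.2
  -- Lipschitz bounds for f1, f2
  have hflip1 : ∀ k x y x' y', |f1 k x y - f1 k x' y'| ≤ l1x k * |x - x'| + l1y k * |y - y'| := by
    intro k
    exact lip2 (fun b x => differentiableAt_of_deriv_ne_zero (ne_of_gt (hf1 k x b).1.1))
      (fun a b => by rw [abs_of_pos (hf1 k a b).1.1]; exact (hf1 k a b).1.2)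
      (fun a b => differentiableAt_of_deriv_ne_zero (ne_of_gt (hf1 k a b).2.1))
      (fun a b => by rw [abs_of_pos (hf1 k a b).2.1]; exact (hf1 k a b).2.2)
  have hflip2 : ∀ k x y x' y', |f2 k x y - f2 k x' y'| ≤ l2x k * |x - x'| + l2y k * |y - y'| := by
    intro k
    exact lip2 (fun b x => differentiableAt_of_deriv_ne_zero (ne_of_gt (hf2 k x b).1.1))
      (fun a b => by rw [abs_of_pos (hf2 k a b).1.1]; exact (hf2 k a b).1.2)
      (fun a b => differentiableAt_of_deriv_ne_zero (ne_of_gt (hf2 k a b).2.1))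
      (fun a b => by rw [abs_of_pos (hf2 k a b).2.1]; exact (hf2 k a b).2.2)
  have habs : |X j - X' j| = ξ j * P := by
    have h1 : |σ * (X j - X' j)| = |X j - X' j| := by
      rcases hσ with h | h <;> subst h <;> simp [abs_mul, abs_sub_comm]
    rw [hatt] at h1
    rw [← h1, abs_of_pos (mul_pos (hξ j) hP)]
  have hsign : σ * (X j - X' j) = |X j - X' j| := by rw [hatt, habs]
  -- diagonal bound
  have hdiag : σ * (c1 j * (f1 j (X j) (Y j) - f1 j (X' j) (Y' j))
             + c2 j * (f2 j (X j) (Y j) - f2 j (X' j) (Y' j)))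
      ≤ (max (c1 j) 0 * l1x j * ξ j + max (c2 j) 0 * l2x j * ξ j
         + φ j * |c1 j| * l1y j + φ j * |c2 j| * l2y j) * P := by
    have s1 := sl1 (c := c1 j) (y := Y j) (y' := Y' j)
      (fun a b => (hf1 j a b).1) (fun a b => (hf1 j a b).2) hσ hsign
    have s2 := sl1 (c := c2 j) (y := Y j) (y' := Y' j)
      (fun a b => (hf2 j a b).1) (fun a b => (hf2 j a b).2) hσ hsign
    have v1 : |c1 j| * (l1y j * |Y j - Y' j|) ≤ |c1 j| * (l1y j * (φ j * P)) :=
      mul_le_mul_of_nonneg_left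
        (mul_le_mul_of_nonneg_left (hY j) (hl1y j).le) (abs_nonneg _)
    have v2 : |c2 j| * (l2y j * |Y j - Y' j|) ≤ |c2 j| * (l2y j * (φ j * P)) :=
      mul_le_mul_of_nonneg_left
        (mul_le_mul_of_nonneg_left (hY j) (hl2y j).le) (abs_nonneg _)
    rw [habs] at s1 s2
    linarith [s1, s2, v1, v2]
  -- off-diagonal bound
  have hoff : ∀ k : Fin n, σ * (c1 k * (f1 k (X k) (Y k) - f1 k (X' k) (Y' k))
             + c2 k * (f2 k (X k) (Y k) - f2 k (X' k) (Y' k)))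
      ≤ (ξ k * |c1 k| * l1x k + φ k * |c1 k| * l1y k
         + ξ k * |c2 k| * l2x k + φ k * |c2 k| * l2y k) * P := by
    intro k
    have A1 : σ * (c1 k * (f1 k (X k) (Y k) - f1 k (X' k) (Y' k)))
        ≤ |c1 k| * |f1 k (X k) (Y k) - f1 k (X' k) (Y' k)| := by
      have := absle hσ (c1 k * (f1 k (X k) (Y k) - f1 k (X' k) (Y' k)))
      rwa [abs_mul] at this
    have A2 : σ * (c2 k * (f2 k (X k) (Y k) - f2 k (X' k) (Y' k)))
        ≤ |c2 k| * |f2 k (X k) (Y k) - f2 k (X' k) (Y' k)| := by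
      have := absle hσ (c2 k * (f2 k (X k) (Y k) - f2 k (X' k) (Y' k)))
      rwa [abs_mul] at this
    have B1 : |f1 k (X k) (Y k) - f1 k (X' k) (Y' k)| ≤ l1x k * (ξ k * P) + l1y k * (φ k * P) := by
      refine le_trans (hflip1 k _ _ _ _) ?_
      have u1 := mul_le_mul_of_nonneg_left (hX k) (hl1x k).le
      have u2 := mul_le_mul_of_nonneg_left (hY k) (hl1y k).le
      linarith
    have B2 : |f2 k (X k) (Y k) - f2 k (X' k) (Y' k)| ≤ l2x k * (ξ k * P) + l2y k * (φ k * P) := by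
      refine le_trans (hflip2 k _ _ _ _) ?_
      have u1 := mul_le_mul_of_nonneg_left (hX k) (hl2x k).le
      have u2 := mul_le_mul_of_nonneg_left (hY k) (hl2y k).le
      linarith
    have C1 := mul_le_mul_of_nonneg_left B1 (abs_nonneg (c1 k))
    have C2 := mul_le_mul_of_nonneg_left B2 (abs_nonneg (c2 k))
    linarith [A1, A2, C1, C2]
  -- delayed bound
  have hdel : ∀ k : Fin n, σ * (e1 k * (g1 k (Xd k) (Yd k) - g1 k (X'd k) (Y'd k))
             + e2 k * (g2 k (Xd k) (Yd k) - g2 k (X'd k) (Y'd k)))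
      ≤ (ξ k * |e1 k| * m1x k + φ k * |e1 k| * m1y k
         + ξ k * |e2 k| * m2x k + φ k * |e2 k| * m2y k) * (Real.exp (ε' * τ k) * P) := by
    intro k
    obtain ⟨hm1, hm2, hm3, hm4⟩ := hm k
    have A1 : σ * (e1 k * (g1 k (Xd k) (Yd k) - g1 k (X'd k) (Y'd k)))
        ≤ |e1 k| * |g1 k (Xd k) (Yd k) - g1 k (X'd k) (Y'd k)| := by
      have := absle hσ (e1 k * (g1 k (Xd k) (Yd k) - g1 k (X'd k) (Y'd k)))
      rwa [abs_mul] at this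
    have A2 : σ * (e2 k * (g2 k (Xd k) (Yd k) - g2 k (X'd k) (Y'd k)))
        ≤ |e2 k| * |g2 k (Xd k) (Yd k) - g2 k (X'd k) (Y'd k)| := by
      have := absle hσ (e2 k * (g2 k (Xd k) (Yd k) - g2 k (X'd k) (Y'd k)))
      rwa [abs_mul] at this
    have B1 : |g1 k (Xd k) (Yd k) - g1 k (X'd k) (Y'd k)|
        ≤ m1x k * (ξ k * P * Real.exp (ε' * τ k)) + m1y k * (φ k * P * Real.exp (ε' * τ k)) := by
      refine le_trans (hg1 k _ _ _ _) ?_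
      have u1 := mul_le_mul_of_nonneg_left (hXd k) hm1
      have u2 := mul_le_mul_of_nonneg_left (hYd k) hm2
      linarith
    have B2 : |g2 k (Xd k) (Yd k) - g2 k (X'd k) (Y'd k)|
        ≤ m2x k * (ξ k * P * Real.exp (ε' * τ k)) + m2y k * (φ k * P * Real.exp (ε' * τ k)) := by
      refine le_trans (hg2 k _ _ _ _) ?_
      have u1 := mul_le_mul_of_nonneg_left (hXd k) hm3
      have u2 := mul_le_mul_of_nonneg_left (hYd k) hm4
      linarith
    have C1 := mul_le_mul_of_nonneg_left B1 (abs_nonneg (e1 k))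
    have C2 := mul_le_mul_of_nonneg_left B2 (abs_nonneg (e2 k))
    linarith [A1, A2, C1, C2]
  -- summed bounds
  have hoffsum : ∑ k ∈ Finset.univ.erase j,
      σ * (c1 k * (f1 k (X k) (Y k) - f1 k (X' k) (Y' k))
         + c2 k * (f2 k (X k) (Y k) - f2 k (X' k) (Y' k)))
      ≤ ((∑ k ∈ Finset.univ.erase j, ξ k * |c1 k| * l1x k)
        + (∑ k ∈ Finset.univ.erase j, φ k * |c1 k| * l1y k)
        + (∑ k ∈ Finset.univ.erase j, ξ k * |c2 k| * l2x k)
        + (∑ k ∈ Finset.univ.erase j, φ k * |c2 k| * l2y k)) * P := by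
    have h1 := Finset.sum_le_sum (fun k (_ : k ∈ Finset.univ.erase j) => hoff k)
    refine le_trans h1 (le_of_eq ?_)
    rw [← Finset.sum_mul]
    congr 1
    rw [← Finset.sum_add_distrib, ← Finset.sum_add_distrib, ← Finset.sum_add_distrib]
  have hdelsum : ∑ k, σ * (e1 k * (g1 k (Xd k) (Yd k) - g1 k (X'd k) (Y'd k))
             + e2 k * (g2 k (Xd k) (Yd k) - g2 k (X'd k) (Y'd k)))
      ≤ (∑ k, (ξ k * |e1 k| * m1x k + φ k * |e1 k| * m1y k
               + ξ k * |e2 k| * m2x k + φ k * |e2 k| * m2y k) * Real.exp (ε * τ k)) * P := by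
    have h1 := Finset.sum_le_sum (fun k (_ : k ∈ (Finset.univ : Finset (Fin n))) => hdel k)
    refine le_trans h1 ?_
    rw [Finset.sum_mul]
    refine Finset.sum_le_sum (fun k _ => ?_)
    obtain ⟨hm1, hm2, hm3, hm4⟩ := hm k
    have hco : 0 ≤ ξ k * |e1 k| * m1x k + φ k * |e1 k| * m1y k
               + ξ k * |e2 k| * m2x k + φ k * |e2 k| * m2y k := by
      have := (hξ k).le; have := (hφ k).le
      positivity
    have hex : Real.exp (ε' * τ k) ≤ Real.exp (ε * τ k) :=
      Real.exp_le_exp.2 (mul_le_mul_of_nonneg_right hεε.le (hτ k))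
    calc (ξ k * |e1 k| * m1x k + φ k * |e1 k| * m1y k
               + ξ k * |e2 k| * m2x k + φ k * |e2 k| * m2y k) * (Real.exp (ε' * τ k) * P)
        ≤ (ξ k * |e1 k| * m1x k + φ k * |e1 k| * m1y k
               + ξ k * |e2 k| * m2x k + φ k * |e2 k| * m2y k) * (Real.exp (ε * τ k) * P) := by
          exact mul_le_mul_of_nonneg_left
            (mul_le_mul_of_nonneg_right hex hP.le) hco
      _ = _ := by ring
  -- split the f-sum at j
  have hsplitf : ∑ k, σ * (c1 k * (f1 k (X k) (Y k) - f1 k (X' k) (Y' k))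
             + c2 k * (f2 k (X k) (Y k) - f2 k (X' k) (Y' k)))
      = σ * (c1 j * (f1 j (X j) (Y j) - f1 j (X' j) (Y' j))
             + c2 j * (f2 j (X j) (Y j) - f2 j (X' j) (Y' j)))
        + ∑ k ∈ Finset.univ.erase j, σ * (c1 k * (f1 k (X k) (Y k) - f1 k (X' k) (Y' k))
             + c2 k * (f2 k (X k) (Y k) - f2 k (X' k) (Y' k))) :=
    (Finset.add_sum_erase _ _ (mem_univ j)).symm
  -- univ sums split at j (for the φ-sums in hT)
  have hS2 : (∑ k, φ k * |c1 k| * l1y k)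
      = φ j * |c1 j| * l1y j + ∑ k ∈ Finset.univ.erase j, φ k * |c1 k| * l1y k :=
    (Finset.add_sum_erase _ _ (mem_univ j)).symm
  have hS4 : (∑ k, φ k * |c2 k| * l2y k)
      = φ j * |c2 j| * l2y j + ∑ k ∈ Finset.univ.erase j, φ k * |c2 k| * l2y k :=
    (Finset.add_sum_erase _ _ (mem_univ j)).symm
  -- final assembly
  have hQ : ξ j * (-dj + ε' + max (c1 j) 0 * l1x j + max (c2 j) 0 * l2x j)
      + (∑ k ∈ Finset.univ.erase j, ξ k * |c1 k| * l1x k)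
      + (∑ k, φ k * |c1 k| * l1y k)
      + (∑ k ∈ Finset.univ.erase j, ξ k * |c2 k| * l2x k)
      + (∑ k, φ k * |c2 k| * l2y k)
      + (∑ k, (ξ k * |e1 k| * m1x k + φ k * |e1 k| * m1y k
               + ξ k * |e2 k| * m2x k + φ k * |e2 k| * m2y k) * Real.exp (ε * τ k))
      ≤ ξ j * (ε' - ε) := by linarith [hT]
  have hQP := mul_le_mul_of_nonneg_right hQ hP.le
  have hneg : ξ j * (ε' - ε) * P < 0 := by
    have h1 : 0 < ξ j * (ε - ε') * P := mul_pos (mul_pos (hξ j) (sub_pos.2 hεε)) hP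
    nlinarith [h1]
  have hd1 : σ * (-dj * (X j - X' j)) = -dj * (ξ j * P) := by
    have : σ * (-dj * (X j - X' j)) = -dj * (σ * (X j - X' j)) := by ring
    rw [this, hatt]
  have hS2P : (∑ k, φ k * |c1 k| * l1y k) * P
      = φ j * |c1 j| * l1y j * P + (∑ k ∈ Finset.univ.erase j, φ k * |c1 k| * l1y k) * P := by
    rw [hS2]; ring
  have hS4P : (∑ k, φ k * |c2 k| * l2y k) * P
      = φ j * |c2 j| * l2y j * P + (∑ k ∈ Finset.univ.erase j, φ k * |c2 k| * l2y k) * P := by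
    rw [hS4]; ring
  rw [mul_add, mul_add, Finset.mul_sum, Finset.mul_sum, hsplitf]
  linarith [hdiag, hoffsum, hdelsum, hd1, hQP, hneg, hS2P, hS4P]


-- from aux2.lean

lemma halanay {ι : Type*} [Fintype ι] [Nonempty ι] (p : ι → ℝ → ℝ)
    (hdiff : ∀ i, Differentiable ℝ (p i))
    (ε' : ℝ) (hε' : 0 < ε') (τbar : ℝ) (hτbar : 0 ≤ τbar) (B : ℝ)
    (hinit : ∀ s, -τbar ≤ s → s ≤ 0 → ∀ i, |p i s| ≤ B * Real.exp (-ε' * s))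
    (hder : ∀ t, 0 ≤ t → ∀ i, ∀ σ : ℝ, (σ = 1 ∨ σ = -1) → ∀ K, 0 < K →
      (∀ s, -τbar ≤ s → s ≤ t → ∀ i', |p i' s| ≤ K * Real.exp (-ε' * s)) →
      σ * p i t = K * Real.exp (-ε' * t) →
      σ * deriv (p i) t + ε' * (K * Real.exp (-ε' * t)) < 0) :
    ∀ t, 0 ≤ t → ∀ i, |p i t| ≤ B * Real.exp (-ε' * t) := by
  have hB : 0 ≤ B := by
    obtain ⟨i⟩ := ‹Nonempty ι›
    have h0 := hinit 0 (by linarith) le_rfl i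
    simp only [mul_zero, Real.exp_zero, mul_one] at h0
    linarith [abs_nonneg (p i 0)]
  by_contra hcon
  push_neg at hcon
  obtain ⟨t1, ht1, i1, hi1⟩ := hcon
  set q : ℝ → ℝ := fun t => ‖(fun i => p i t : ι → ℝ)‖ with hq
  have hqc : Continuous q := (continuous_pi (fun i => (hdiff i).continuous)).norm
  have hqle : ∀ t i, |p i t| ≤ q t := fun t i => by
    simpa [Real.norm_eq_abs] using norm_le_pi_norm (fun i => p i t) i
  have hqle' : ∀ t C, 0 ≤ C → (∀ i, |p i t| ≤ C) → q t ≤ C := fun t C hC hc => by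
    refine (pi_norm_le_iff_of_nonneg hC).2 (fun i => ?_)
    simpa [Real.norm_eq_abs] using hc i
  set r : ℝ → ℝ := fun t => q t * Real.exp (ε' * t) with hr
  have hrc : Continuous r := hqc.mul (Real.continuous_exp.comp (continuous_const.mul continuous_id))
  have hee : ∀ s : ℝ, Real.exp (-ε' * s) * Real.exp (ε' * s) = 1 := fun s => by
    rw [← Real.exp_add]; ring_nf; exact Real.exp_zero
  have hrt1 : B < r t1 := by
    have h1 : B * Real.exp (-ε' * t1) < |p i1 t1| := hi1
    have h2 : |p i1 t1| ≤ q t1 := hqle t1 i1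
    have h3 : (0:ℝ) < Real.exp (ε' * t1) := Real.exp_pos _
    have := mul_lt_mul_of_pos_right (lt_of_lt_of_le h1 h2) h3
    calc B = B * (Real.exp (-ε' * t1) * Real.exp (ε' * t1)) := by rw [hee]; ring
      _ = B * Real.exp (-ε' * t1) * Real.exp (ε' * t1) := by ring
      _ < q t1 * Real.exp (ε' * t1) := this
      _ = r t1 := rfl
  set K : ℝ := (B + r t1) / 2 with hK
  have hK1 : B < K := by simp only [hK]; linarith
  have hK2 : K < r t1 := by simp only [hK]; linarith
  have hKpos : 0 < K := lt_of_le_of_lt hB hK1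
  set S : Set ℝ := {t | 0 ≤ t ∧ K ≤ r t} with hS
  have hSclosed : IsClosed S := by
    have : S = Set.Ici (0:ℝ) ∩ r ⁻¹' Set.Ici K := by
      ext t; simp [hS, Set.mem_setOf_eq, and_comm]
    rw [this]
    exact isClosed_Ici.inter (isClosed_Ici.preimage hrc)
  have hSne : S.Nonempty := ⟨t1, ht1, hK2.le⟩
  have hSbdd : BddBelow S := ⟨0, fun t ht => ht.1⟩
  set tstar : ℝ := sInf S with htstar
  have htS : tstar ∈ S := hSclosed.csInf_mem hSne hSbdd
  have htpos0 : 0 ≤ tstar := htS.1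
  have hr0 : r 0 ≤ B := by
    have : q 0 ≤ B := hqle' 0 B hB (fun i => by
      simpa using hinit 0 (by linarith) le_rfl i)
    simpa [hr] using this
  have htpos : 0 < tstar := by
    rcases lt_or_eq_of_le htpos0 with h | h
    · exact h
    · exfalso; have := htS.2; rw [← h] at this; linarith
  have hlow : ∀ s, 0 ≤ s → s < tstar → r s < K := by
    intro s hs0 hst
    by_contra hcon2
    push_neg at hcon2
    have : s ∈ S := ⟨hs0, hcon2⟩
    have := csInf_le hSbdd this
    linarith
  have hup : r tstar ≤ K := by
    have htd : Filter.Tendsto r (nhdsWithin tstar (Set.Iio tstar)) (nhds (r tstar)) :=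
      (hrc.tendsto tstar).mono_left nhdsWithin_le_nhds
    refine le_of_tendsto htd ?_
    filter_upwards [Ioo_mem_nhdsLT_of_mem (Set.mem_Ioc.2 ⟨htpos, le_rfl⟩)] with s hs2
    exact (hlow s hs2.1.le hs2.2).le
  have hreq : r tstar = K := le_antisymm hup htS.2
  have hwin : ∀ s, -τbar ≤ s → s ≤ tstar → ∀ i', |p i' s| ≤ K * Real.exp (-ε' * s) := by
    intro s hs1 hs2 i'
    rcases le_or_gt s 0 with h | h
    · have := hinit s hs1 h i'
      have hK3 : B * Real.exp (-ε' * s) ≤ K * Real.exp (-ε' * s) :=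
        mul_le_mul_of_nonneg_right hK1.le (Real.exp_pos _).le
      linarith
    · have hrs : r s ≤ K := by
        rcases lt_or_eq_of_le hs2 with h2 | h2
        · exact (hlow s h.le h2).le
        · rw [h2, hreq]
      have h1 : |p i' s| ≤ q s := hqle s i'
      have h2 : q s = r s * Real.exp (-ε' * s) := by
        simp only [hr]
        rw [mul_assoc, mul_comm (Real.exp _), hee s, mul_one]
      rw [h2] at h1
      calc |p i' s| ≤ r s * Real.exp (-ε' * s) := h1
        _ ≤ K * Real.exp (-ε' * s) := mul_le_mul_of_nonneg_right hrs (Real.exp_pos _).le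
  -- attainment of the sup norm at tstar
  obtain ⟨i0, _, hi0max⟩ := Finset.exists_max_image (univ : Finset ι)
    (fun i => |p i tstar|) univ_nonempty
  have hattq : |p i0 tstar| = q tstar := by
    refine le_antisymm (hqle tstar i0) ?_
    exact hqle' tstar _ (abs_nonneg _) (fun i => hi0max i (mem_univ i))
  have hqt : q tstar = K * Real.exp (-ε' * tstar) := by
    have : r tstar * Real.exp (-ε' * tstar) = K * Real.exp (-ε' * tstar) := by rw [hreq]
    calc q tstar = r tstar * Real.exp (-ε' * tstar) := by
          simp only [hr]; rw [mul_assoc, mul_comm (Real.exp _), hee tstar, mul_one]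
      _ = K * Real.exp (-ε' * tstar) := this
  set σ : ℝ := if 0 ≤ p i0 tstar then 1 else -1 with hσdef
  have hσ : σ = 1 ∨ σ = -1 := by by_cases h : 0 ≤ p i0 tstar <;> simp [hσdef, h]
  have hσp : σ * p i0 tstar = |p i0 tstar| := by
    by_cases h : 0 ≤ p i0 tstar
    · simp [hσdef, h, abs_of_nonneg h]
    · push_neg at h; simp [hσdef, not_le.2 h, abs_of_neg h]
  have hattain : σ * p i0 tstar = K * Real.exp (-ε' * tstar) := by
    rw [hσp, hattq, hqt]
  have hlt := hder tstar htpos0 i0 σ hσ K hKpos hwin hattain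
  -- contradiction via max at right endpoint
  set D : ℝ := σ * deriv (p i0) tstar * Real.exp (ε' * tstar)
    + σ * p i0 tstar * (Real.exp (ε' * tstar) * ε') with hD
  have hDderiv : HasDerivAt (fun s => σ * p i0 s * Real.exp (ε' * s)) D tstar := by
    have h1 : HasDerivAt (p i0) (deriv (p i0) tstar) tstar := ((hdiff i0) tstar).hasDerivAt
    have h2 : HasDerivAt (fun s : ℝ => ε' * s) ε' tstar := by
      simpa using (hasDerivAt_id tstar).const_mul ε'
    have h3 : HasDerivAt (fun s => Real.exp (ε' * s)) (Real.exp (ε' * tstar) * ε') tstar := h2.exp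
    have h4 := (h1.const_mul σ).mul h3
    convert h4 using 1
    try { simp only [hD]; ring }
    all_goals rfl
  have hmax : ∀ s, 0 ≤ s → s ≤ tstar →
      σ * p i0 s * Real.exp (ε' * s) ≤ σ * p i0 tstar * Real.exp (ε' * tstar) := by
    intro s hs1 hs2
    have h1 : σ * p i0 s ≤ |p i0 s| := by
      rcases hσ with h | h <;> rw [h] <;>
        simp [neg_mul, one_mul] <;> [exact le_abs_self _; exact neg_le_abs _]
    have h2 : |p i0 s| ≤ K * Real.exp (-ε' * s) := hwin s (by linarith) hs2 i0
    have h3 : σ * p i0 s * Real.exp (ε' * s) ≤ K * Real.exp (-ε' * s) * Real.exp (ε' * s) :=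
      mul_le_mul_of_nonneg_right (le_trans h1 h2) (Real.exp_pos _).le
    have h4 : K * Real.exp (-ε' * s) * Real.exp (ε' * s) = K := by
      rw [mul_assoc, hee s, mul_one]
    have h5 : σ * p i0 tstar * Real.exp (ε' * tstar) = K := by
      rw [hattain, mul_assoc, hee tstar, mul_one]
    rw [h5]; rw [h4] at h3; exact h3
  have hge := deriv_nonneg_of_max_left htpos hDderiv hmax
  have hDneg : D < 0 := by
    have he1 : (0:ℝ) < Real.exp (ε' * tstar) := Real.exp_pos _
    have hexp : Real.exp (-ε' * tstar) * Real.exp (ε' * tstar) = 1 := hee tstar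
    have : D = Real.exp (ε' * tstar) * (σ * deriv (p i0) tstar + ε' * (K * Real.exp (-ε' * tstar))) := by
      simp only [hD]
      rw [hattain]
      nlinarith [hexp]
    rw [this]
    exact mul_neg_of_pos_of_neg he1 hlt
  linarith


-- from aux4.lean

lemma condH2_lip {g1 g2 : ℝ → ℝ → ℝ} {mRR mRI mIR mII : ℝ}
    (h : CondH2 g1 g2 mRR mRI mIR mII) :
    (∀ x y x' y', |g1 x y - g1 x' y'| ≤ mRR * |x - x'| + mRI * |y - y'|) ∧
    (∀ x y x' y', |g2 x y - g2 x' y'| ≤ mIR * |x - x'| + mII * |y - y'|) := by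
  obtain ⟨h1, h2, h3⟩ := h
  constructor
  · intro x y x' y'
    exact lip2 (f := g1)
      (fun b => (h1.differentiable one_ne_zero).comp (differentiable_id.prodMk (differentiable_const b)))
      (fun a b => (h3 a b).1)
      (fun a => (h1.differentiable one_ne_zero).comp ((differentiable_const a).prodMk differentiable_id))
      (fun a b => (h3 a b).2.1) x y x' y'
  · intro x y x' y'
    exact lip2 (f := g2)
      (fun b => (h2.differentiable one_ne_zero).comp (differentiable_id.prodMk (differentiable_const b)))
      (fun a b => (h3 a b).2.2.1)
      (fun a => (h2.differentiable one_ne_zero).comp ((differentiable_const a).prodMk differentiable_id))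
      (fun a b => (h3 a b).2.2.2) x y x' y'

lemma inv_bound {a b C : ℝ} (ha : 0 < a) (h : a⁻¹ * b ≤ C) : b ≤ a * C := by
  have h2 := mul_le_mul_of_nonneg_left h ha.le
  rwa [mul_inv_cancel_left₀ ha.ne' b] at h2

lemma inv_eq {a b C σ : ℝ} (ha : 0 < a) (h : σ * (a⁻¹ * b) = C) : σ * b = a * C := by
  have hne := ha.ne'
  field_simp at h
  linarith [h]

lemma scale_neg {ξv E A : ℝ} (hξv : 0 < ξv) (σ ε' : ℝ)
    (h : σ * E + ε' * (ξv * A) < 0) : σ * (ξv⁻¹ * E) + ε' * A < 0 := by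
  have h2 := mul_neg_of_pos_of_neg (inv_pos.2 hξv) h
  have h3 : ξv⁻¹ * (σ * E + ε' * (ξv * A)) = σ * (ξv⁻¹ * E) + ε' * A := by
    field_simp
  linarith [h3 ▸ h2]


-- from aux5.lean

theorem key {n : ℕ} (hn : 1 ≤ n)
    (d : Fin n → ℝ)
    (aR aI bR bI τ : Fin n → Fin n → ℝ) (hτ : ∀ j k, 0 ≤ τ j k)
    (uR uI : Fin n → ℝ)
    (fR fI gR gI : Fin n → ℝ → ℝ → ℝ)
    (lRR lRI lIR lII mRR mRI mIR mII : Fin n → ℝ)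
    (hm : ∀ j, 0 < mRR j ∧ 0 < mRI j ∧ 0 < mIR j ∧ 0 < mII j)
    (hf : ∀ j, CondH1 (fR j) (fI j) (lRR j) (lRI j) (lIR j) (lII j))
    (hg : ∀ j, CondH2 (gR j) (gI j) (mRR j) (mRI j) (mIR j) (mII j))
    (ξ φ : Fin n → ℝ) (hξ : ∀ j, 0 < ξ j) (hφ : ∀ j, 0 < φ j)
    (ε : ℝ) (hε : 0 < ε)
    (hT1 : ∀ j : Fin n,
      ξ j * (-(d j) + ε + max (aR j j) 0 * lRR j + max (-(aI j j)) 0 * lIR j)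
      + (∑ k ∈ Finset.univ.erase j, ξ k * |aR j k| * lRR k)
      + (∑ k, φ k * |aR j k| * lRI k)
      + (∑ k ∈ Finset.univ.erase j, ξ k * |aI j k| * lIR k)
      + (∑ k, φ k * |aI j k| * lII k)
      + (∑ k, (ξ k * |bR j k| * mRR k + φ k * |bR j k| * mRI k
               + ξ k * |bI j k| * mIR k + φ k * |bI j k| * mII k) * Real.exp (ε * τ j k))
      ≤ 0)
    (hT2 : ∀ j : Fin n,
      φ j * (-(d j) + ε + max (aR j j) 0 * lII j + max (aI j j) 0 * lRI j)
      + (∑ k, ξ k * |aR j k| * lIR k)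
      + (∑ k ∈ Finset.univ.erase j, φ k * |aR j k| * lII k)
      + (∑ k, ξ k * |aI j k| * lRR k)
      + (∑ k ∈ Finset.univ.erase j, φ k * |aI j k| * lRI k)
      + (∑ k, (ξ k * |bR j k| * mIR k + φ k * |bR j k| * mII k
               + ξ k * |bI j k| * mRR k + φ k * |bI j k| * mRI k) * Real.exp (ε * τ j k))
      ≤ 0)
    (τbar : ℝ) (hτbar0 : 0 ≤ τbar) (hτbarb : ∀ j k, τ j k ≤ τbar)
    (zR zI wR wI : Fin n → ℝ → ℝ)
    (hz : IsSolution n d aR aI bR bI τ uR uI fR fI gR gI zR zI)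
    (hw : IsSolution n d aR aI bR bI τ uR uI fR fI gR gI wR wI)
    (M0 : ℝ) (hM00 : 0 ≤ M0)
    (hM0 : ∀ s, -τbar ≤ s → s ≤ 0 → ∀ j,
      (ξ j)⁻¹ * |zR j s - wR j s| ≤ M0 ∧ (φ j)⁻¹ * |zI j s - wI j s| ≤ M0) :
    ∀ t, 0 ≤ t → ∀ j,
      (ξ j)⁻¹ * |zR j t - wR j t| ≤ M0 * Real.exp (-ε * t) ∧
      (φ j)⁻¹ * |zI j t - wI j t| ≤ M0 * Real.exp (-ε * t) := by
  haveI : Nonempty (Fin n) := ⟨⟨0, hn⟩⟩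
  set p : Fin n × Bool → ℝ → ℝ := fun i t =>
    cond i.2 ((φ i.1)⁻¹ * (zI i.1 t - wI i.1 t)) ((ξ i.1)⁻¹ * (zR i.1 t - wR i.1 t)) with hp
  have hdiffp : ∀ i, Differentiable ℝ (p i) := by
    rintro ⟨j, b⟩
    cases b
    · exact (((hz.1 j).differentiable one_ne_zero).sub ((hw.1 j).differentiable one_ne_zero)).const_mul _
    · exact (((hz.2.1 j).differentiable one_ne_zero).sub ((hw.2.1 j).differentiable one_ne_zero)).const_mul _
  -- the per-ε' decay bound
  have hmaster : ∀ ε', 0 < ε' → ε' < ε → ∀ t, 0 ≤ t → ∀ i, |p i t| ≤ M0 * Real.exp (-ε' * t) := by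
    intro ε' hε'1 hε'2
    refine halanay p hdiffp ε' hε'1 τbar hτbar0 M0 ?_ ?_
    · intro s hs1 hs2 i
      have h1 : |p i s| ≤ M0 := by
        rcases i with ⟨j, b⟩
        cases b
        · simpa [hp, abs_mul, abs_of_pos (inv_pos.2 (hξ j))] using (hM0 s hs1 hs2 j).1
        · simpa [hp, abs_mul, abs_of_pos (inv_pos.2 (hφ j))] using (hM0 s hs1 hs2 j).2
      have h2 : (1:ℝ) ≤ Real.exp (-ε' * s) := by
        rw [Real.one_le_exp_iff]  -- maybe wrong name; fix below
        nlinarith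
      nlinarith [h1, h2, hM00]
    · intro t ht i σ hσ K hK hwin hatt
      -- window bounds in convenient form
      have hXb : ∀ k, |zR k t - wR k t| ≤ ξ k * (K * Real.exp (-ε' * t)) := by
        intro k
        have := hwin t (by linarith) le_rfl (k, false)
        exact inv_bound (hξ k) (by simpa [hp, abs_mul, abs_of_pos (inv_pos.2 (hξ k))] using this)
      have hYb : ∀ k, |zI k t - wI k t| ≤ φ k * (K * Real.exp (-ε' * t)) := by
        intro k
        have := hwin t (by linarith) le_rfl (k, true)
        exact inv_bound (hφ k) (by simpa [hp, abs_mul, abs_of_pos (inv_pos.2 (hφ k))] using this)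
      rcases i with ⟨j, b⟩
      have hdel : ∀ k, -τbar ≤ t - τ j k ∧ t - τ j k ≤ t := fun k =>
        ⟨by have := hτbarb j k; linarith, by have := hτ j k; linarith⟩
      have hexpd : ∀ k, K * Real.exp (-ε' * (t - τ j k))
          = K * Real.exp (-ε' * t) * Real.exp (ε' * τ j k) := by
        intro k
        rw [mul_assoc, ← Real.exp_add]
        ring_nf
      have hXdb : ∀ k, |zR k (t - τ j k) - wR k (t - τ j k)|
          ≤ ξ k * (K * Real.exp (-ε' * t)) * Real.exp (ε' * τ j k) := by
        intro k
        have h0 := hwin (t - τ j k) (hdel k).1 (hdel k).2 (k, false)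
        have h1 : |zR k (t - τ j k) - wR k (t - τ j k)| ≤ ξ k * (K * Real.exp (-ε' * (t - τ j k))) :=
          inv_bound (hξ k) (by simpa [hp, abs_mul, abs_of_pos (inv_pos.2 (hξ k))] using h0)
        rw [hexpd k] at h1
        linarith [h1, (by ring : ξ k * (K * Real.exp (-ε' * t) * Real.exp (ε' * τ j k))
          = ξ k * (K * Real.exp (-ε' * t)) * Real.exp (ε' * τ j k))]
      have hYdb : ∀ k, |zI k (t - τ j k) - wI k (t - τ j k)|
          ≤ φ k * (K * Real.exp (-ε' * t)) * Real.exp (ε' * τ j k) := by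
        intro k
        have h0 := hwin (t - τ j k) (hdel k).1 (hdel k).2 (k, true)
        have h1 : |zI k (t - τ j k) - wI k (t - τ j k)| ≤ φ k * (K * Real.exp (-ε' * (t - τ j k))) :=
          inv_bound (hφ k) (by simpa [hp, abs_mul, abs_of_pos (inv_pos.2 (hφ k))] using h0)
        rw [hexpd k] at h1
        linarith [h1, (by ring : φ k * (K * Real.exp (-ε' * t) * Real.exp (ε' * τ j k))
          = φ k * (K * Real.exp (-ε' * t)) * Real.exp (ε' * τ j k))]
      have hPpos : 0 < K * Real.exp (-ε' * t) := mul_pos hK (Real.exp_pos _)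
      cases b
      case false =>
        have hdp : deriv (p (j, false)) t = (ξ j)⁻¹ * (deriv (zR j) t - deriv (wR j) t) :=
          ((((hz.1 j).differentiable one_ne_zero t).hasDerivAt.sub
            (((hw.1 j).differentiable one_ne_zero t).hasDerivAt)).const_mul (ξ j)⁻¹).deriv
        have hattb : σ * (zR j t - wR j t) = ξ j * (K * Real.exp (-ε' * t)) :=
          inv_eq (hξ j) (by simpa [hp] using hatt)
        have hTe : ξ j * (-(d j) + ε + max (aR j j) 0 * lRR j + max (-(aI j j)) 0 * lIR j)
            + (∑ k ∈ Finset.univ.erase j, ξ k * |aR j k| * lRR k)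
            + (∑ k, φ k * |aR j k| * lRI k)
            + (∑ k ∈ Finset.univ.erase j, ξ k * |-(aI j k)| * lIR k)
            + (∑ k, φ k * |-(aI j k)| * lII k)
            + (∑ k, (ξ k * |bR j k| * mRR k + φ k * |bR j k| * mRI k
                     + ξ k * |-(bI j k)| * mIR k + φ k * |-(bI j k)| * mII k)
                * Real.exp (ε * τ j k)) ≤ 0 := by
          have h := hT1 j
          have q2 : (∑ k ∈ Finset.univ.erase j, ξ k * |-(aI j k)| * lIR k)
              = ∑ k ∈ Finset.univ.erase j, ξ k * |aI j k| * lIR k :=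
            Finset.sum_congr rfl (fun k _ => by simp only [abs_neg])
          have q3 : (∑ k, φ k * |-(aI j k)| * lII k) = ∑ k, φ k * |aI j k| * lII k :=
            Finset.sum_congr rfl (fun k _ => by simp only [abs_neg])
          have q4 : (∑ k, (ξ k * |bR j k| * mRR k + φ k * |bR j k| * mRI k
                     + ξ k * |-(bI j k)| * mIR k + φ k * |-(bI j k)| * mII k)
                * Real.exp (ε * τ j k))
              = ∑ k, (ξ k * |bR j k| * mRR k + φ k * |bR j k| * mRI k
                     + ξ k * |bI j k| * mIR k + φ k * |bI j k| * mII k)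
                * Real.exp (ε * τ j k) :=
            Finset.sum_congr rfl (fun k _ => by simp only [abs_neg])
          linarith [q2, q3, q4]
        have hm0 : ∀ k, 0 ≤ mRR k ∧ 0 ≤ mRI k ∧ 0 ≤ mIR k ∧ 0 ≤ mII k := fun k =>
          ⟨(hm k).1.le, (hm k).2.1.le, (hm k).2.2.1.le, (hm k).2.2.2.le⟩
        have hmain := est j ξ φ hξ hφ (d j) (aR j) (fun k => -(aI j k)) (bR j)
          (fun k => -(bI j k)) (τ j) (hτ j) fR fI gR gI lRR lRI lIR lII mRR mRI mIR mII
          hm0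
          (fun k a b => ⟨((hf k).2.2 a b).1, ((hf k).2.2 a b).2.1⟩)
          (fun k a b => ⟨((hf k).2.2 a b).2.2.1, ((hf k).2.2 a b).2.2.2⟩)
          (fun k => (condH2_lip (hg k)).1)
          (fun k => (condH2_lip (hg k)).2)
          ε ε' hε'1 hε'2 hTe
          (fun k => zR k t) (fun k => zI k t) (fun k => wR k t) (fun k => wI k t)
          (fun k => zR k (t - τ j k)) (fun k => zI k (t - τ j k))
          (fun k => wR k (t - τ j k)) (fun k => wI k (t - τ j k))
          (K * Real.exp (-ε' * t)) hPpos hXb hYb hXdb hYdb σ hσ hattb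
        have hEq : deriv (zR j) t - deriv (wR j) t
            = -(d j) * (zR j t - wR j t)
            + (∑ k, (aR j k * (fR k (zR k t) (zI k t) - fR k (wR k t) (wI k t))
                   + -(aI j k) * (fI k (zR k t) (zI k t) - fI k (wR k t) (wI k t))))
            + (∑ k, (bR j k * (gR k (zR k (t - τ j k)) (zI k (t - τ j k))
                              - gR k (wR k (t - τ j k)) (wI k (t - τ j k)))
                   + -(bI j k) * (gI k (zR k (t - τ j k)) (zI k (t - τ j k))
                              - gI k (wR k (t - τ j k)) (wI k (t - τ j k))))) := by
          rw [hz.2.2.1 j t ht, hw.2.2.1 j t ht]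
          have e1 : (∑ k, (aR j k * fR k (zR k t) (zI k t) - aI j k * fI k (zR k t) (zI k t)))
              - (∑ k, (aR j k * fR k (wR k t) (wI k t) - aI j k * fI k (wR k t) (wI k t)))
              = ∑ k, (aR j k * (fR k (zR k t) (zI k t) - fR k (wR k t) (wI k t))
                   + -(aI j k) * (fI k (zR k t) (zI k t) - fI k (wR k t) (wI k t))) := by
            rw [← Finset.sum_sub_distrib]
            exact Finset.sum_congr rfl (fun k _ => by ring)
          have e2 : (∑ k, (bR j k * gR k (zR k (t - τ j k)) (zI k (t - τ j k))
                          - bI j k * gI k (zR k (t - τ j k)) (zI k (t - τ j k))))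
              - (∑ k, (bR j k * gR k (wR k (t - τ j k)) (wI k (t - τ j k))
                          - bI j k * gI k (wR k (t - τ j k)) (wI k (t - τ j k))))
              = ∑ k, (bR j k * (gR k (zR k (t - τ j k)) (zI k (t - τ j k))
                              - gR k (wR k (t - τ j k)) (wI k (t - τ j k)))
                   + -(bI j k) * (gI k (zR k (t - τ j k)) (zI k (t - τ j k))
                              - gI k (wR k (t - τ j k)) (wI k (t - τ j k)))) := by
            rw [← Finset.sum_sub_distrib]
            exact Finset.sum_congr rfl (fun k _ => by ring)
          linarith [e1, e2]
        show σ * deriv (p (j, false)) t + ε' * (K * Real.exp (-ε' * t)) < 0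
        rw [hdp, hEq]
        exact scale_neg (hξ j) σ ε' hmain
      case true =>
        have hdp : deriv (p (j, true)) t = (φ j)⁻¹ * (deriv (zI j) t - deriv (wI j) t) :=
          ((((hz.2.1 j).differentiable one_ne_zero t).hasDerivAt.sub
            (((hw.2.1 j).differentiable one_ne_zero t).hasDerivAt)).const_mul (φ j)⁻¹).deriv
        have hattb : σ * (zI j t - wI j t) = φ j * (K * Real.exp (-ε' * t)) :=
          inv_eq (hφ j) (by simpa [hp] using hatt)
        have hTe : φ j * (-(d j) + ε + max (aR j j) 0 * lII j + max (aI j j) 0 * lRI j)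
            + (∑ k ∈ Finset.univ.erase j, φ k * |aR j k| * lII k)
            + (∑ k, ξ k * |aR j k| * lIR k)
            + (∑ k ∈ Finset.univ.erase j, φ k * |aI j k| * lRI k)
            + (∑ k, ξ k * |aI j k| * lRR k)
            + (∑ k, (φ k * |bR j k| * mII k + ξ k * |bR j k| * mIR k
                     + φ k * |bI j k| * mRI k + ξ k * |bI j k| * mRR k)
                * Real.exp (ε * τ j k)) ≤ 0 := by
          have h := hT2 j
          have q4 : (∑ k, (φ k * |bR j k| * mII k + ξ k * |bR j k| * mIR k
                     + φ k * |bI j k| * mRI k + ξ k * |bI j k| * mRR k)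
                * Real.exp (ε * τ j k))
              = ∑ k, (ξ k * |bR j k| * mIR k + φ k * |bR j k| * mII k
                     + ξ k * |bI j k| * mRR k + φ k * |bI j k| * mRI k)
                * Real.exp (ε * τ j k) :=
            Finset.sum_congr rfl (fun k _ => by ring)
          linarith [q4]
        have hm0 : ∀ k, 0 ≤ mII k ∧ 0 ≤ mIR k ∧ 0 ≤ mRI k ∧ 0 ≤ mRR k := fun k =>
          ⟨(hm k).2.2.2.le, (hm k).2.2.1.le, (hm k).2.1.le, (hm k).1.le⟩
        have hmain := est j φ ξ hφ hξ (d j) (aR j) (aI j) (bR j) (bI j) (τ j) (hτ j)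
          (fun k x y => fI k y x) (fun k x y => fR k y x)
          (fun k x y => gI k y x) (fun k x y => gR k y x)
          lII lIR lRI lRR mII mIR mRI mRR
          hm0
          (fun k a b => ⟨((hf k).2.2 b a).2.2.2, ((hf k).2.2 b a).2.2.1⟩)
          (fun k a b => ⟨((hf k).2.2 b a).2.1, ((hf k).2.2 b a).1⟩)
          (fun k x y x' y' => by have := (condH2_lip (hg k)).2 y x y' x'; linarith)
          (fun k x y x' y' => by have := (condH2_lip (hg k)).1 y x y' x'; linarith)
          ε ε' hε'1 hε'2 hTe
          (fun k => zI k t) (fun k => zR k t) (fun k => wI k t) (fun k => wR k t)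
          (fun k => zI k (t - τ j k)) (fun k => zR k (t - τ j k))
          (fun k => wI k (t - τ j k)) (fun k => wR k (t - τ j k))
          (K * Real.exp (-ε' * t)) hPpos hYb hXb hYdb hXdb σ hσ hattb
        have hEq : deriv (zI j) t - deriv (wI j) t
            = -(d j) * (zI j t - wI j t)
            + (∑ k, (aR j k * (fI k (zR k t) (zI k t) - fI k (wR k t) (wI k t))
                   + aI j k * (fR k (zR k t) (zI k t) - fR k (wR k t) (wI k t))))
            + (∑ k, (bR j k * (gI k (zR k (t - τ j k)) (zI k (t - τ j k))
                              - gI k (wR k (t - τ j k)) (wI k (t - τ j k)))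
                   + bI j k * (gR k (zR k (t - τ j k)) (zI k (t - τ j k))
                              - gR k (wR k (t - τ j k)) (wI k (t - τ j k))))) := by
          rw [hz.2.2.2 j t ht, hw.2.2.2 j t ht]
          have e1 : (∑ k, (aR j k * fI k (zR k t) (zI k t) + aI j k * fR k (zR k t) (zI k t)))
              - (∑ k, (aR j k * fI k (wR k t) (wI k t) + aI j k * fR k (wR k t) (wI k t)))
              = ∑ k, (aR j k * (fI k (zR k t) (zI k t) - fI k (wR k t) (wI k t))
                   + aI j k * (fR k (zR k t) (zI k t) - fR k (wR k t) (wI k t))) := by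
            rw [← Finset.sum_sub_distrib]
            exact Finset.sum_congr rfl (fun k _ => by ring)
          have e2 : (∑ k, (bR j k * gI k (zR k (t - τ j k)) (zI k (t - τ j k))
                          + bI j k * gR k (zR k (t - τ j k)) (zI k (t - τ j k))))
              - (∑ k, (bR j k * gI k (wR k (t - τ j k)) (wI k (t - τ j k))
                          + bI j k * gR k (wR k (t - τ j k)) (wI k (t - τ j k))))
              = ∑ k, (bR j k * (gI k (zR k (t - τ j k)) (zI k (t - τ j k))
                              - gI k (wR k (t - τ j k)) (wI k (t - τ j k)))
                   + bI j k * (gR k (zR k (t - τ j k)) (zI k (t - τ j k))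
                              - gR k (wR k (t - τ j k)) (wI k (t - τ j k)))) := by
            rw [← Finset.sum_sub_distrib]
            exact Finset.sum_congr rfl (fun k _ => by ring)
          linarith [e1, e2]
        show σ * deriv (p (j, true)) t + ε' * (K * Real.exp (-ε' * t)) < 0
        rw [hdp, hEq]
        exact scale_neg (hφ j) σ ε' hmain
  -- pass to the limit ε' → ε
  have hfinal : ∀ t, 0 ≤ t → ∀ i, |p i t| ≤ M0 * Real.exp (-ε * t) := by
    intro t ht i
    have hseq : ∀ m : ℕ, |p i t| ≤ M0 * Real.exp (-(ε - ε / (m + 2)) * t) := by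
      intro m
      have h1 : 0 < ε / (m + 2) := by positivity
      have h2 : ε / ((m : ℝ) + 2) < ε := by
        rw [div_lt_iff₀ (by positivity)]
        nlinarith [h1]
      exact hmaster (ε - ε / (m + 2)) (by linarith) (by linarith) t ht i
    have hlim : Filter.Tendsto (fun m : ℕ => M0 * Real.exp (-(ε - ε / (m + 2)) * t))
        Filter.atTop (nhds (M0 * Real.exp (-ε * t))) := by
      have h1 : Filter.Tendsto (fun m : ℕ => ε / ((m : ℝ) + 2)) Filter.atTop (nhds 0) := by
        apply Filter.Tendsto.div_atTop tendsto_const_nhds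
        exact Filter.tendsto_atTop_add_const_right _ 2 tendsto_natCast_atTop_atTop
      have h2 : Filter.Tendsto (fun m : ℕ => -(ε - ε / (m + 2)) * t) Filter.atTop
          (nhds (-ε * t)) := by
        have := ((h1.const_sub ε).neg).mul_const t
        simpa using this
      exact (Real.continuous_exp.continuousAt.tendsto.comp h2).const_mul M0
    exact ge_of_tendsto hlim (Filter.Eventually.of_forall hseq)
  intro t ht j
  constructor
  · have := hfinal t ht (j, false)
    simpa [hp, abs_mul, abs_of_pos (inv_pos.2 (hξ j))] using this
  · have := hfinal t ht (j, true)
    simpa [hp, abs_mul, abs_of_pos (inv_pos.2 (hφ j))] using this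


-- from aux6.lean

lemma window_bound {n : ℕ} (hn : 1 ≤ n) (ξ φ : Fin n → ℝ)
    (F G : Fin n → ℝ → ℝ) (hF : ∀ j, Continuous (F j)) (hG : ∀ j, Continuous (G j))
    (a b : ℝ) (hab : a ≤ b) :
    ∃ M0, 0 ≤ M0 ∧ ∀ s, a ≤ s → s ≤ b → ∀ j,
      (ξ j)⁻¹ * |F j s| ≤ M0 ∧ (φ j)⁻¹ * |G j s| ≤ M0 := by
  haveI : Nonempty (Fin n) := ⟨⟨0, hn⟩⟩
  set V : ℝ → (Fin n × Bool → ℝ) := fun s i =>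
    cond i.2 ((φ i.1)⁻¹ * G i.1 s) ((ξ i.1)⁻¹ * F i.1 s) with hV
  have hVc : Continuous V := by
    apply continuous_pi
    rintro ⟨j, b'⟩
    cases b'
    · exact continuous_const.mul (hF j)
    · exact continuous_const.mul (hG j)
  have hq : Continuous (fun s => ‖V s‖) := hVc.norm
  obtain ⟨s0, hs0mem, hs0max⟩ := (isCompact_Icc (a := a) (b := b)).exists_isMaxOn
    ⟨a, Set.left_mem_Icc.2 hab⟩ hq.continuousOn
  refine ⟨‖V s0‖, norm_nonneg _, fun s hs1 hs2 j => ?_⟩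
  have hmem : s ∈ Set.Icc a b := ⟨hs1, hs2⟩
  have h1 : ‖V s‖ ≤ ‖V s0‖ := hs0max hmem
  constructor
  · have h2 : |V s (j, false)| ≤ ‖V s‖ := by
      simpa [Real.norm_eq_abs] using norm_le_pi_norm (V s) (j, false)
    have h3 : |V s (j, false)| = |(ξ j)⁻¹ * F j s| := rfl
    calc (ξ j)⁻¹ * |F j s| ≤ |(ξ j)⁻¹ * F j s| := by
          rw [abs_mul]
          exact mul_le_mul_of_nonneg_right (le_abs_self _) (abs_nonneg _)
      _ ≤ ‖V s0‖ := by rw [← h3]; exact le_trans h2 h1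
  · have h2 : |V s (j, true)| ≤ ‖V s‖ := by
      simpa [Real.norm_eq_abs] using norm_le_pi_norm (V s) (j, true)
    have h3 : |V s (j, true)| = |(φ j)⁻¹ * G j s| := rfl
    calc (φ j)⁻¹ * |G j s| ≤ |(φ j)⁻¹ * G j s| := by
          rw [abs_mul]
          exact mul_le_mul_of_nonneg_right (le_abs_self _) (abs_nonneg _)
      _ ≤ ‖V s0‖ := by rw [← h3]; exact le_trans h2 h1

lemma decay_le_zero {C A ε : ℝ} (hε : 0 < ε)
    (h : ∀ t, 0 ≤ t → A ≤ C * Real.exp (-ε * t)) : A ≤ 0 := by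
  have h1 : Filter.Tendsto (fun t : ℝ => -ε * t) Filter.atTop Filter.atBot := by
    apply Filter.Tendsto.const_mul_atTop_of_neg (neg_lt_zero.2 hε) Filter.tendsto_id
  have h2 : Filter.Tendsto (fun t : ℝ => C * Real.exp (-ε * t)) Filter.atTop (nhds (C * 0)) :=
    (Real.tendsto_exp_atBot.comp h1).const_mul C
  have h3 := ge_of_tendsto h2 (by
    filter_upwards [Filter.eventually_ge_atTop (0:ℝ)] with t ht
    exact h t ht)
  linarith


-- from aux7.lean

lemma equil_sol {n : ℕ} {d : Fin n → ℝ} {aR aI bR bI τ : Fin n → Fin n → ℝ}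
    {uR uI : Fin n → ℝ} {fR fI gR gI : Fin n → ℝ → ℝ → ℝ} {zbR zbI : Fin n → ℝ}
    (heq : IsEquilibrium n d aR aI bR bI uR uI fR fI gR gI zbR zbI) :
    IsSolution n d aR aI bR bI τ uR uI fR fI gR gI
      (fun j _ => zbR j) (fun j _ => zbI j) := by
  refine ⟨fun j => contDiff_const, fun j => contDiff_const, fun j t _ => ?_, fun j t _ => ?_⟩
  · rw [deriv_const]
    exact (heq.1 j).symm
  · rw [deriv_const]
    exact (heq.2 j).symm

lemma shift_sol {n : ℕ} {d : Fin n → ℝ} {aR aI bR bI τ : Fin n → Fin n → ℝ}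
    {uR uI : Fin n → ℝ} {fR fI gR gI : Fin n → ℝ → ℝ → ℝ} {zR zI : Fin n → ℝ → ℝ}
    (hz : IsSolution n d aR aI bR bI τ uR uI fR fI gR gI zR zI)
    (h : ℝ) (hh : 0 ≤ h) :
    IsSolution n d aR aI bR bI τ uR uI fR fI gR gI
      (fun j t => zR j (t + h)) (fun j t => zI j (t + h)) := by
  have hc : ContDiff ℝ 1 (fun t : ℝ => t + h) := contDiff_id.add contDiff_const
  have hdv : ∀ (w : Fin n → ℝ → ℝ), (∀ j, ContDiff ℝ 1 (w j)) → ∀ j t,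
      deriv (fun s => w j (s + h)) t = deriv (w j) (t + h) := by
    intro w hw j t
    have h1 : HasDerivAt (fun s : ℝ => s + h) 1 t := (hasDerivAt_id t).add_const h
    have h2 : HasDerivAt (w j) (deriv (w j) (t + h)) (t + h) :=
      ((hw j).differentiable one_ne_zero (t + h)).hasDerivAt
    have h3 := HasDerivAt.comp t h2 h1
    have h4 := h3.deriv
    rw [mul_one] at h4
    exact h4
  refine ⟨fun j => (hz.1 j).comp hc, fun j => (hz.2.1 j).comp hc,
    fun j t ht => ?_, fun j t ht => ?_⟩
  · rw [hdv zR hz.1 j t, hz.2.2.1 j (t + h) (by linarith)]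
    have harg : ∀ k : Fin n, t + h - τ j k = t - τ j k + h := fun k => by ring
    simp only [harg]
  · rw [hdv zI hz.2.1 j t, hz.2.2.2 j (t + h) (by linarith)]
    have harg : ∀ k : Fin n, t + h - τ j k = t - τ j k + h := fun k => by ring
    simp only [harg]

lemma estd {n : ℕ} (j : Fin n)
    (ξ φ : Fin n → ℝ) (hξ : ∀ k, 0 < ξ k) (hφ : ∀ k, 0 < φ k)
    (dj : ℝ) (hdj : 0 ≤ dj)
    (c1 c2 e1 e2 : Fin n → ℝ)
    (f1 f2 g1 g2 : Fin n → ℝ → ℝ → ℝ)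
    (l1x l1y l2x l2y m1x m1y m2x m2y : Fin n → ℝ)
    (hl : ∀ k, 0 ≤ l1x k ∧ 0 ≤ l1y k ∧ 0 ≤ l2x k ∧ 0 ≤ l2y k)
    (hm : ∀ k, 0 ≤ m1x k ∧ 0 ≤ m1y k ∧ 0 ≤ m2x k ∧ 0 ≤ m2y k)
    (hf1 : ∀ k x y x' y', |f1 k x y - f1 k x' y'| ≤ l1x k * |x - x'| + l1y k * |y - y'|)
    (hf2 : ∀ k x y x' y', |f2 k x y - f2 k x' y'| ≤ l2x k * |x - x'| + l2y k * |y - y'|)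
    (hg1 : ∀ k x y x' y', |g1 k x y - g1 k x' y'| ≤ m1x k * |x - x'| + m1y k * |y - y'|)
    (hg2 : ∀ k x y x' y', |g2 k x y - g2 k x' y'| ≤ m2x k * |x - x'| + m2y k * |y - y'|)
    (X Y X' Y' Xd Yd X'd Y'd : Fin n → ℝ)
    (Q R : ℝ) (hQ : 0 ≤ Q) (hR : 0 ≤ R)
    (hX : ∀ k, |X k - X' k| ≤ ξ k * Q) (hY : ∀ k, |Y k - Y' k| ≤ φ k * Q)
    (hXd : ∀ k, |Xd k - X'd k| ≤ ξ k * (Q * R))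
    (hYd : ∀ k, |Yd k - Y'd k| ≤ φ k * (Q * R)) :
    |(-dj) * (X j - X' j)
      + (∑ k, (c1 k * (f1 k (X k) (Y k) - f1 k (X' k) (Y' k))
             + c2 k * (f2 k (X k) (Y k) - f2 k (X' k) (Y' k))))
      + (∑ k, (e1 k * (g1 k (Xd k) (Yd k) - g1 k (X'd k) (Y'd k))
             + e2 k * (g2 k (Xd k) (Yd k) - g2 k (X'd k) (Y'd k))))|
      ≤ (dj * ξ j
        + (∑ k, (|c1 k| * (l1x k * ξ k + l1y k * φ k) + |c2 k| * (l2x k * ξ k + l2y k * φ k)))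
        + (∑ k, (|e1 k| * (m1x k * ξ k + m1y k * φ k) + |e2 k| * (m2x k * ξ k + m2y k * φ k))) * R)
        * Q := by
  have habs1 : |(-dj) * (X j - X' j)| ≤ dj * ξ j * Q := by
    rw [abs_mul, abs_neg, abs_of_nonneg hdj]
    calc dj * |X j - X' j| ≤ dj * (ξ j * Q) := mul_le_mul_of_nonneg_left (hX j) hdj
      _ = dj * ξ j * Q := by ring
  have habs2 : |∑ k, (c1 k * (f1 k (X k) (Y k) - f1 k (X' k) (Y' k))
             + c2 k * (f2 k (X k) (Y k) - f2 k (X' k) (Y' k)))|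
      ≤ (∑ k, (|c1 k| * (l1x k * ξ k + l1y k * φ k)
             + |c2 k| * (l2x k * ξ k + l2y k * φ k))) * Q := by
    refine le_trans (Finset.abs_sum_le_sum_abs _ _) ?_
    rw [Finset.sum_mul]
    refine Finset.sum_le_sum (fun k _ => ?_)
    obtain ⟨hl1, hl2, hl3, hl4⟩ := hl k
    have t1 : |f1 k (X k) (Y k) - f1 k (X' k) (Y' k)| ≤ l1x k * (ξ k * Q) + l1y k * (φ k * Q) := by
      refine le_trans (hf1 k _ _ _ _) ?_
      have u1 := mul_le_mul_of_nonneg_left (hX k) hl1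
      have u2 := mul_le_mul_of_nonneg_left (hY k) hl2
      linarith
    have t2 : |f2 k (X k) (Y k) - f2 k (X' k) (Y' k)| ≤ l2x k * (ξ k * Q) + l2y k * (φ k * Q) := by
      refine le_trans (hf2 k _ _ _ _) ?_
      have u1 := mul_le_mul_of_nonneg_left (hX k) hl3
      have u2 := mul_le_mul_of_nonneg_left (hY k) hl4
      linarith
    have t3 := mul_le_mul_of_nonneg_left t1 (abs_nonneg (c1 k))
    have t4 := mul_le_mul_of_nonneg_left t2 (abs_nonneg (c2 k))
    calc |c1 k * (f1 k (X k) (Y k) - f1 k (X' k) (Y' k))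
             + c2 k * (f2 k (X k) (Y k) - f2 k (X' k) (Y' k))|
        ≤ |c1 k * (f1 k (X k) (Y k) - f1 k (X' k) (Y' k))|
          + |c2 k * (f2 k (X k) (Y k) - f2 k (X' k) (Y' k))| := abs_add_le _ _
      _ = |c1 k| * |f1 k (X k) (Y k) - f1 k (X' k) (Y' k)|
          + |c2 k| * |f2 k (X k) (Y k) - f2 k (X' k) (Y' k)| := by rw [abs_mul, abs_mul]
      _ ≤ (|c1 k| * (l1x k * ξ k + l1y k * φ k) + |c2 k| * (l2x k * ξ k + l2y k * φ k)) * Q := by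
          nlinarith [t3, t4]
  have habs3 : |∑ k, (e1 k * (g1 k (Xd k) (Yd k) - g1 k (X'd k) (Y'd k))
             + e2 k * (g2 k (Xd k) (Yd k) - g2 k (X'd k) (Y'd k)))|
      ≤ (∑ k, (|e1 k| * (m1x k * ξ k + m1y k * φ k)
             + |e2 k| * (m2x k * ξ k + m2y k * φ k))) * R * Q := by
    refine le_trans (Finset.abs_sum_le_sum_abs _ _) ?_
    rw [Finset.sum_mul, Finset.sum_mul]
    refine Finset.sum_le_sum (fun k _ => ?_)
    obtain ⟨hm1, hm2, hm3, hm4⟩ := hm k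
    have t1 : |g1 k (Xd k) (Yd k) - g1 k (X'd k) (Y'd k)|
        ≤ m1x k * (ξ k * (Q * R)) + m1y k * (φ k * (Q * R)) := by
      refine le_trans (hg1 k _ _ _ _) ?_
      have u1 := mul_le_mul_of_nonneg_left (hXd k) hm1
      have u2 := mul_le_mul_of_nonneg_left (hYd k) hm2
      linarith
    have t2 : |g2 k (Xd k) (Yd k) - g2 k (X'd k) (Y'd k)|
        ≤ m2x k * (ξ k * (Q * R)) + m2y k * (φ k * (Q * R)) := by
      refine le_trans (hg2 k _ _ _ _) ?_
      have u1 := mul_le_mul_of_nonneg_left (hXd k) hm3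
      have u2 := mul_le_mul_of_nonneg_left (hYd k) hm4
      linarith
    have t3 := mul_le_mul_of_nonneg_left t1 (abs_nonneg (e1 k))
    have t4 := mul_le_mul_of_nonneg_left t2 (abs_nonneg (e2 k))
    calc |e1 k * (g1 k (Xd k) (Yd k) - g1 k (X'd k) (Y'd k))
             + e2 k * (g2 k (Xd k) (Yd k) - g2 k (X'd k) (Y'd k))|
        ≤ |e1 k| * |g1 k (Xd k) (Yd k) - g1 k (X'd k) (Y'd k)|
          + |e2 k| * |g2 k (Xd k) (Yd k) - g2 k (X'd k) (Y'd k)| := by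
          rw [← abs_mul, ← abs_mul]; exact abs_add_le _ _
      _ ≤ (|e1 k| * (m1x k * ξ k + m1y k * φ k) + |e2 k| * (m2x k * ξ k + m2y k * φ k)) * R * Q := by
          nlinarith [t3, t4]
  set A := (-dj) * (X j - X' j) with hA
  set B := ∑ k, (c1 k * (f1 k (X k) (Y k) - f1 k (X' k) (Y' k))
             + c2 k * (f2 k (X k) (Y k) - f2 k (X' k) (Y' k))) with hB
  set C := ∑ k, (e1 k * (g1 k (Xd k) (Yd k) - g1 k (X'd k) (Y'd k))
             + e2 k * (g2 k (Xd k) (Yd k) - g2 k (X'd k) (Y'd k))) with hC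
  have w2 : |A + B| ≤ |A| + |B| := abs_add_le _ _
  have w1 : |A + B + C| ≤ |A| + |B| + |C| :=
    (abs_add_le (A + B) C).trans (by linarith)
  linarith [w1, habs1, habs2, habs3]


-- from aux8.lean

lemma conv_of_shift_decay {w : ℝ → ℝ} {ρ C0 ε : ℝ} (hρ : 0 < ρ) (hε : 0 < ε)
    (hw : ∀ h, 0 ≤ h → h ≤ 1 → ∀ t, 0 ≤ t → ρ⁻¹ * |w (t + h) - w t| ≤ C0 * Real.exp (-ε * t)) :
    ∃ L, Filter.Tendsto w Filter.atTop (nhds L) := by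
  have hw' : ∀ h, 0 ≤ h → h ≤ 1 → ∀ t, 0 ≤ t → |w (t + h) - w t| ≤ ρ * (C0 * Real.exp (-ε * t)) :=
    fun h h0 h1 t ht => inv_bound hρ (hw h h0 h1 t ht)
  have hexp1 : Real.exp (-ε) < 1 := Real.exp_lt_one_iff.2 (by linarith)
  have hpow : ∀ m : ℕ, Real.exp (-ε * (m : ℝ)) = Real.exp (-ε) ^ m := by
    intro m; rw [← Real.exp_nat_mul]; ring_nf
  have hgeo : Summable (fun m : ℕ => ρ * C0 * Real.exp (-ε) ^ m) :=
    (summable_geometric_of_lt_one (Real.exp_nonneg _) hexp1).mul_left _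
  have hcs : CauchySeq (fun m : ℕ => w m) := by
    apply cauchySeq_of_dist_le_of_summable _ _ hgeo
    intro m
    rw [Real.dist_eq, abs_sub_comm]
    have h1 := hw' 1 zero_le_one le_rfl m (Nat.cast_nonneg m)
    have h2 : ((m.succ : ℕ) : ℝ) = (m : ℝ) + 1 := by push_cast; ring
    rw [h2]
    calc |w ((m:ℝ) + 1) - w (m:ℝ)| ≤ ρ * (C0 * Real.exp (-ε * (m:ℝ))) := h1
      _ = ρ * C0 * Real.exp (-ε) ^ m := by rw [hpow]; ring
  obtain ⟨L, hL⟩ := cauchySeq_tendsto_of_complete hcs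
  refine ⟨L, ?_⟩
  rw [tendsto_iff_dist_tendsto_zero]
  have hb2 : Filter.Tendsto (fun t : ℝ => Real.exp (-ε * (⌊t⌋₊ : ℝ))) Filter.atTop (nhds 0) := by
    have hb1 : Filter.Tendsto (fun m : ℕ => Real.exp (-ε * (m : ℝ))) Filter.atTop (nhds 0) := by
      have := tendsto_pow_atTop_nhds_zero_of_lt_one (Real.exp_nonneg (-ε)) hexp1
      exact this.congr (fun m => (hpow m).symm)
    exact hb1.comp tendsto_nat_floor_atTop
  have hb3 : Filter.Tendsto (fun t : ℝ => dist (w (⌊t⌋₊ : ℝ)) L) Filter.atTop (nhds 0) :=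
    (tendsto_iff_dist_tendsto_zero.1 hL).comp tendsto_nat_floor_atTop
  have hbound : Filter.Tendsto
      (fun t : ℝ => ρ * (C0 * Real.exp (-ε * (⌊t⌋₊ : ℝ))) + dist (w (⌊t⌋₊ : ℝ)) L)
      Filter.atTop (nhds 0) := by
    have := ((hb2.const_mul C0).const_mul ρ).add hb3
    simpa using this
  refine tendsto_of_tendsto_of_tendsto_of_le_of_le' tendsto_const_nhds hbound
    (Filter.Eventually.of_forall (fun t => dist_nonneg)) ?_
  filter_upwards [Filter.eventually_ge_atTop (0:ℝ)] with t ht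
  have hfl : (⌊t⌋₊ : ℝ) ≤ t := Nat.floor_le ht
  have hfl2 : t < (⌊t⌋₊ : ℝ) + 1 := Nat.lt_floor_add_one t
  have hsb := hw' (t - ⌊t⌋₊) (by linarith) (by linarith) (⌊t⌋₊ : ℝ) (Nat.cast_nonneg _)
  rw [show (⌊t⌋₊:ℝ) + (t - (⌊t⌋₊:ℝ)) = t from by ring] at hsb
  calc dist (w t) L ≤ dist (w t) (w (⌊t⌋₊ : ℝ)) + dist (w (⌊t⌋₊ : ℝ)) L := dist_triangle _ _ _
    _ ≤ ρ * (C0 * Real.exp (-ε * (⌊t⌋₊ : ℝ))) + dist (w (⌊t⌋₊ : ℝ)) L := by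
        have : dist (w t) (w (⌊t⌋₊ : ℝ)) = |w t - w (⌊t⌋₊ : ℝ)| := Real.dist_eq _ _
        rw [this]
        linarith [hsb]

lemma condH1_lip {f1 f2 : ℝ → ℝ → ℝ} {lRR lRI lIR lII : ℝ}
    (h : CondH1 f1 f2 lRR lRI lIR lII) :
    (∀ x y x' y', |f1 x y - f1 x' y'| ≤ lRR * |x - x'| + lRI * |y - y'|) ∧
    (∀ x y x' y', |f2 x y - f2 x' y'| ≤ lIR * |x - x'| + lII * |y - y'|) := by
  obtain ⟨_, _, h3⟩ := h
  constructor
  · intro x y x' y'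
    exact lip2 (fun b x => differentiableAt_of_deriv_ne_zero (ne_of_gt (h3 x b).1.1))
      (fun a b => by rw [abs_of_pos (h3 a b).1.1]; exact (h3 a b).1.2)
      (fun a b => differentiableAt_of_deriv_ne_zero (ne_of_gt (h3 a b).2.1.1))
      (fun a b => by rw [abs_of_pos (h3 a b).2.1.1]; exact (h3 a b).2.1.2) x y x' y'
  · intro x y x' y'
    exact lip2 (fun b x => differentiableAt_of_deriv_ne_zero (ne_of_gt (h3 x b).2.2.1.1))
      (fun a b => by rw [abs_of_pos (h3 a b).2.2.1.1]; exact (h3 a b).2.2.1.2)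
      (fun a b => differentiableAt_of_deriv_ne_zero (ne_of_gt (h3 a b).2.2.2.1))
      (fun a b => by rw [abs_of_pos (h3 a b).2.2.2.1]; exact (h3 a b).2.2.2.2) x y x' y'


set_option maxHeartbeats 1000000 in
theorem stmt0
    (n : ℕ) (hn : 1 ≤ n)
    (d : Fin n → ℝ) (hd : ∀ j, 0 < d j)
    (aR aI bR bI τ : Fin n → Fin n → ℝ) (hτ : ∀ j k, 0 ≤ τ j k)
    (uR uI : Fin n → ℝ)
    (fR fI gR gI : Fin n → ℝ → ℝ → ℝ)
    (lRR lRI lIR lII mRR mRI mIR mII : Fin n → ℝ)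
    (hl : ∀ j, 0 < lRR j ∧ 0 < lRI j ∧ 0 < lIR j ∧ 0 < lII j)
    (hm : ∀ j, 0 < mRR j ∧ 0 < mRI j ∧ 0 < mIR j ∧ 0 < mII j)
    (hf : ∀ j, CondH1 (fR j) (fI j) (lRR j) (lRI j) (lIR j) (lII j))
    (hg : ∀ j, CondH2 (gR j) (gI j) (mRR j) (mRI j) (mIR j) (mII j))
    (ξ φ : Fin n → ℝ) (hξ : ∀ j, 0 < ξ j) (hφ : ∀ j, 0 < φ j)
    (ε : ℝ) (hε : 0 < ε)
    (hT1 : ∀ j : Fin n,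
      ξ j * (-(d j) + ε + max (aR j j) 0 * lRR j + max (-(aI j j)) 0 * lIR j)
      + (∑ k ∈ Finset.univ.erase j, ξ k * |aR j k| * lRR k)
      + (∑ k, φ k * |aR j k| * lRI k)
      + (∑ k ∈ Finset.univ.erase j, ξ k * |aI j k| * lIR k)
      + (∑ k, φ k * |aI j k| * lII k)
      + (∑ k, (ξ k * |bR j k| * mRR k + φ k * |bR j k| * mRI k
               + ξ k * |bI j k| * mIR k + φ k * |bI j k| * mII k) * Real.exp (ε * τ j k))
      ≤ 0)
    (hT2 : ∀ j : Fin n,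
      φ j * (-(d j) + ε + max (aR j j) 0 * lII j + max (aI j j) 0 * lRI j)
      + (∑ k, ξ k * |aR j k| * lIR k)
      + (∑ k ∈ Finset.univ.erase j, φ k * |aR j k| * lII k)
      + (∑ k, ξ k * |aI j k| * lRR k)
      + (∑ k ∈ Finset.univ.erase j, φ k * |aI j k| * lRI k)
      + (∑ k, (ξ k * |bR j k| * mIR k + φ k * |bR j k| * mII k
               + ξ k * |bI j k| * mRR k + φ k * |bI j k| * mRI k) * Real.exp (ε * τ j k))
      ≤ 0)
    (hsol : ∃ zR zI, IsSolution n d aR aI bR bI τ uR uI fR fI gR gI zR zI) :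
    ∃ zbR zbI : Fin n → ℝ,
      IsEquilibrium n d aR aI bR bI uR uI fR fI gR gI zbR zbI ∧
      (∀ wR wI : Fin n → ℝ,
        IsEquilibrium n d aR aI bR bI uR uI fR fI gR gI wR wI → wR = zbR ∧ wI = zbI) ∧
      (∀ zR zI : Fin n → ℝ → ℝ,
        IsSolution n d aR aI bR bI τ uR uI fR fI gR gI zR zI →
        ∃ c : ℝ, 0 < c ∧ ∀ t : ℝ, 0 ≤ t →
          (∀ j, (ξ j)⁻¹ * |zR j t - zbR j| ≤ c * Real.exp (-ε * t)) ∧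
          (∀ j, (φ j)⁻¹ * |zI j t - zbI j| ≤ c * Real.exp (-ε * t)) ∧
          (∀ j, (ξ j)⁻¹ * |deriv (zR j) t| ≤ c * Real.exp (-ε * t)) ∧
          (∀ j, (φ j)⁻¹ * |deriv (zI j) t| ≤ c * Real.exp (-ε * t))) := by

  classical
  obtain ⟨zR0, zI0, hz0⟩ := hsol
  haveI hne : Nonempty (Fin n) := ⟨⟨0, hn⟩⟩
  obtain ⟨q0, _, hq0⟩ := Finset.exists_max_image (univ : Finset (Fin n × Fin n))
    (fun q => τ q.1 q.2) univ_nonempty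
  set τbar : ℝ := τ q0.1 q0.2 with hτbardef
  have hτbar0 : 0 ≤ τbar := hτ _ _
  have hτbarb : ∀ j k, τ j k ≤ τbar := fun j k => hq0 (j, k) (mem_univ _)
  have hfRlip : ∀ k, ∀ x y x' y',
      |fR k x y - fR k x' y'| ≤ lRR k * |x - x'| + lRI k * |y - y'| :=
    fun k => (condH1_lip (hf k)).1
  have hfIlip : ∀ k, ∀ x y x' y',
      |fI k x y - fI k x' y'| ≤ lIR k * |x - x'| + lII k * |y - y'| :=
    fun k => (condH1_lip (hf k)).2
  have hgRlip : ∀ k, ∀ x y x' y',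
      |gR k x y - gR k x' y'| ≤ mRR k * |x - x'| + mRI k * |y - y'| :=
    fun k => (condH2_lip (hg k)).1
  have hgIlip : ∀ k, ∀ x y x' y',
      |gI k x y - gI k x' y'| ≤ mIR k * |x - x'| + mII k * |y - y'| :=
    fun k => (condH2_lip (hg k)).2
  -- uniform shift decay for the given solution
  obtain ⟨C0, hC00, hC0⟩ := window_bound hn ξ φ (fun j s => zR0 j s) (fun j s => zI0 j s)
    (fun j => (hz0.1 j).continuous) (fun j => (hz0.2.1 j).continuous) (-τbar) 1 (by linarith)
  have hshift : ∀ h, 0 ≤ h → h ≤ 1 → ∀ t, 0 ≤ t → ∀ j,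
      (ξ j)⁻¹ * |zR0 j (t + h) - zR0 j t| ≤ (2 * C0) * Real.exp (-ε * t) ∧
      (φ j)⁻¹ * |zI0 j (t + h) - zI0 j t| ≤ (2 * C0) * Real.exp (-ε * t) := by
    intro h hh0 hh1
    refine key hn d aR aI bR bI τ hτ uR uI fR fI gR gI lRR lRI lIR lII mRR mRI mIR mII
      hm hf hg ξ φ hξ hφ ε hε hT1 hT2 τbar hτbar0 hτbarb _ _ _ _
      (shift_sol hz0 h hh0) hz0 (2 * C0) (by linarith) ?_
    intro s hs1 hs2 j
    have b1 := (hC0 (s + h) (by linarith) (by linarith) j).1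
    have b2 := (hC0 s (by linarith) (by linarith) j).1
    have b3 := (hC0 (s + h) (by linarith) (by linarith) j).2
    have b4 := (hC0 s (by linarith) (by linarith) j).2
    have hinv1 : (0:ℝ) ≤ (ξ j)⁻¹ := (inv_pos.2 (hξ j)).le
    have hinv2 : (0:ℝ) ≤ (φ j)⁻¹ := (inv_pos.2 (hφ j)).le
    constructor
    · have htri := mul_le_mul_of_nonneg_left (abs_sub (zR0 j (s + h)) (zR0 j s)) hinv1
      nlinarith [htri, b1, b2]
    · have htri := mul_le_mul_of_nonneg_left (abs_sub (zI0 j (s + h)) (zI0 j s)) hinv2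
      nlinarith [htri, b3, b4]
  -- convergence of the solution to a limit point
  have hconvR : ∀ j, ∃ L, Filter.Tendsto (zR0 j) Filter.atTop (nhds L) := by
    intro j
    exact conv_of_shift_decay (hξ j) hε (fun h h0 h1 t ht => (hshift h h0 h1 t ht j).1)
  have hconvI : ∀ j, ∃ L, Filter.Tendsto (zI0 j) Filter.atTop (nhds L) := by
    intro j
    exact conv_of_shift_decay (hφ j) hε (fun h h0 h1 t ht => (hshift h h0 h1 t ht j).2)
  choose zbR hzbR using hconvR
  choose zbI hzbI using hconvI
  -- the limit point is an equilibrium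
  have hsubt : ∀ c : ℝ, Filter.Tendsto (fun t : ℝ => t - c) Filter.atTop Filter.atTop := by
    intro c
    simpa [sub_eq_add_neg] using Filter.tendsto_atTop_add_const_right Filter.atTop (-c)
      Filter.tendsto_id
  have hpair : ∀ k, Filter.Tendsto (fun t => (zR0 k t, zI0 k t)) Filter.atTop
      (nhds (zbR k, zbI k)) := fun k => (hzbR k).prodMk_nhds (hzbI k)
  have hpaird : ∀ j k, Filter.Tendsto (fun t => (zR0 k (t - τ j k), zI0 k (t - τ j k)))
      Filter.atTop (nhds (zbR k, zbI k)) := fun j k =>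
    ((hzbR k).comp (hsubt (τ j k))).prodMk_nhds ((hzbI k).comp (hsubt (τ j k)))
  have hmvtzero : ∀ (v : ℝ → ℝ) (Lv E : ℝ), ContDiff ℝ 1 v →
      Filter.Tendsto v Filter.atTop (nhds Lv) →
      Filter.Tendsto (fun t => deriv v t) Filter.atTop (nhds E) → E = 0 := by
    intro v Lv E hv hvL hvd
    have hmvt : ∀ m : ℕ, ∃ c ∈ Set.Ioo ((m:ℝ)) ((m:ℝ) + 1),
        deriv v c = (v ((m:ℝ) + 1) - v (m:ℝ)) / (((m:ℝ) + 1) - (m:ℝ)) := fun m =>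
      exists_deriv_eq_slope v (by linarith) (hv.continuous.continuousOn)
        ((hv.differentiable one_ne_zero).differentiableOn)
    choose cc hcc hcceq using hmvt
    have hcctop : Filter.Tendsto cc Filter.atTop Filter.atTop :=
      Filter.tendsto_atTop_mono (fun m => (hcc m).1.le) tendsto_natCast_atTop_atTop
    have h1 : Filter.Tendsto (fun m => deriv v (cc m)) Filter.atTop (nhds E) :=
      hvd.comp hcctop
    have h2 : Filter.Tendsto (fun m => deriv v (cc m)) Filter.atTop (nhds 0) := by
      have e : ∀ m : ℕ, deriv v (cc m) = v ((m:ℝ) + 1) - v (m:ℝ) := by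
        intro m; rw [hcceq m]; norm_num
      have h3 : Filter.Tendsto (fun m : ℕ => v ((m:ℝ) + 1)) Filter.atTop (nhds Lv) :=
        hvL.comp (Filter.tendsto_atTop_add_const_right Filter.atTop (1:ℝ)
          tendsto_natCast_atTop_atTop)
      have h4 := h3.sub (hvL.comp tendsto_natCast_atTop_atTop)
      simpa using h4.congr (fun m => (e m).symm)
    exact tendsto_nhds_unique h1 h2
  have heqbar : IsEquilibrium n d aR aI bR bI uR uI fR fI gR gI zbR zbI := by
    constructor
    · intro j
      refine hmvtzero (zR0 j) (zbR j) _ (hz0.1 j) (hzbR j) ?_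
      have hRHSlim : Filter.Tendsto (fun t =>
          -(d j) * zR0 j t
          + (∑ k, (aR j k * fR k (zR0 k t) (zI0 k t) - aI j k * fI k (zR0 k t) (zI0 k t)))
          + (∑ k, (bR j k * gR k (zR0 k (t - τ j k)) (zI0 k (t - τ j k))
                   - bI j k * gI k (zR0 k (t - τ j k)) (zI0 k (t - τ j k))))
          + uR j) Filter.atTop (nhds (
          -(d j) * zbR j
          + (∑ k, (aR j k * fR k (zbR k) (zbI k) - aI j k * fI k (zbR k) (zbI k)))
          + (∑ k, (bR j k * gR k (zbR k) (zbI k) - bI j k * gI k (zbR k) (zbI k)))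
          + uR j)) := by
        refine Filter.Tendsto.add (Filter.Tendsto.add (Filter.Tendsto.add ?_ ?_) ?_)
          tendsto_const_nhds
        · exact (hzbR j).const_mul _
        · refine tendsto_finset_sum _ (fun k _ => Filter.Tendsto.sub ?_ ?_)
          · exact (((hf k).1.continuous.tendsto (zbR k, zbI k)).comp (hpair k)).const_mul _
          · exact (((hf k).2.1.continuous.tendsto (zbR k, zbI k)).comp (hpair k)).const_mul _
        · refine tendsto_finset_sum _ (fun k _ => Filter.Tendsto.sub ?_ ?_)
          · exact (((hg k).1.continuous.tendsto (zbR k, zbI k)).comp (hpaird j k)).const_mul _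
          · exact (((hg k).2.1.continuous.tendsto (zbR k, zbI k)).comp (hpaird j k)).const_mul _
      refine hRHSlim.congr' ?_
      filter_upwards [Filter.eventually_ge_atTop (0:ℝ)] with t ht
      exact (hz0.2.2.1 j t ht).symm
    · intro j
      refine hmvtzero (zI0 j) (zbI j) _ (hz0.2.1 j) (hzbI j) ?_
      have hRHSlim : Filter.Tendsto (fun t =>
          -(d j) * zI0 j t
          + (∑ k, (aR j k * fI k (zR0 k t) (zI0 k t) + aI j k * fR k (zR0 k t) (zI0 k t)))
          + (∑ k, (bR j k * gI k (zR0 k (t - τ j k)) (zI0 k (t - τ j k))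
                   + bI j k * gR k (zR0 k (t - τ j k)) (zI0 k (t - τ j k))))
          + uI j) Filter.atTop (nhds (
          -(d j) * zbI j
          + (∑ k, (aR j k * fI k (zbR k) (zbI k) + aI j k * fR k (zbR k) (zbI k)))
          + (∑ k, (bR j k * gI k (zbR k) (zbI k) + bI j k * gR k (zbR k) (zbI k)))
          + uI j)) := by
        refine Filter.Tendsto.add (Filter.Tendsto.add (Filter.Tendsto.add ?_ ?_) ?_)
          tendsto_const_nhds
        · exact (hzbI j).const_mul _
        · refine tendsto_finset_sum _ (fun k _ => Filter.Tendsto.add ?_ ?_)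
          · exact (((hf k).2.1.continuous.tendsto (zbR k, zbI k)).comp (hpair k)).const_mul _
          · exact (((hf k).1.continuous.tendsto (zbR k, zbI k)).comp (hpair k)).const_mul _
        · refine tendsto_finset_sum _ (fun k _ => Filter.Tendsto.add ?_ ?_)
          · exact (((hg k).2.1.continuous.tendsto (zbR k, zbI k)).comp (hpaird j k)).const_mul _
          · exact (((hg k).1.continuous.tendsto (zbR k, zbI k)).comp (hpaird j k)).const_mul _
      refine hRHSlim.congr' ?_
      filter_upwards [Filter.eventually_ge_atTop (0:ℝ)] with t ht
      exact (hz0.2.2.2 j t ht).symm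
  refine ⟨zbR, zbI, heqbar, ?_, ?_⟩
  · -- uniqueness of equilibria
    intro wR wI hw
    obtain ⟨M1, hM10, hM1w⟩ := window_bound hn ξ φ (fun j _ => wR j - zbR j)
      (fun j _ => wI j - zbI j) (fun j => continuous_const) (fun j => continuous_const)
      (-τbar) 0 (by linarith)
    have hkeyu := key hn d aR aI bR bI τ hτ uR uI fR fI gR gI lRR lRI lIR lII mRR mRI mIR mII
      hm hf hg ξ φ hξ hφ ε hε hT1 hT2 τbar hτbar0 hτbarb _ _ _ _
      (equil_sol (τ := τ) hw) (equil_sol (τ := τ) heqbar) M1 hM10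
      (fun s h1 h2 j => hM1w s h1 h2 j)
    constructor <;> funext j
    · have h1 := decay_le_zero hε (fun t ht => (hkeyu t ht j).1)
      have hinv : 0 < (ξ j)⁻¹ := inv_pos.2 (hξ j)
      have h3 : |wR j - zbR j| = 0 := by nlinarith [abs_nonneg (wR j - zbR j)]
      have := abs_eq_zero.1 h3
      linarith [this]
    · have h1 := decay_le_zero hε (fun t ht => (hkeyu t ht j).2)
      have hinv : 0 < (φ j)⁻¹ := inv_pos.2 (hφ j)
      have h3 : |wI j - zbI j| = 0 := by nlinarith [abs_nonneg (wI j - zbI j)]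
      have := abs_eq_zero.1 h3
      linarith [this]
  · -- exponential convergence of every solution
    intro zR zI hz
    obtain ⟨M0, hM00, hM0w⟩ := window_bound hn ξ φ (fun j s => zR j s - zbR j)
      (fun j s => zI j s - zbI j) (fun j => (hz.1 j).continuous.sub continuous_const)
      (fun j => (hz.2.1 j).continuous.sub continuous_const) (-τbar) 0 (by linarith)
    have hkey := key hn d aR aI bR bI τ hτ uR uI fR fI gR gI lRR lRI lIR lII mRR mRI mIR mII
      hm hf hg ξ φ hξ hφ ε hε hT1 hT2 τbar hτbar0 hτbarb zR zI _ _
      hz (equil_sol (τ := τ) heqbar) M0 hM00 (fun s h1 h2 j => hM0w s h1 h2 j)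
    have hext : ∀ s, -τbar ≤ s → ∀ j,
        (ξ j)⁻¹ * |zR j s - zbR j| ≤ M0 * Real.exp (-ε * s) ∧
        (φ j)⁻¹ * |zI j s - zbI j| ≤ M0 * Real.exp (-ε * s) := by
      intro s hs j
      rcases le_or_gt 0 s with h | h
      · exact hkey s h j
      · have h5 := hM0w s hs h.le j
        have h6 : (1:ℝ) ≤ Real.exp (-ε * s) := Real.one_le_exp (by nlinarith)
        constructor <;> nlinarith [h5.1, h5.2, h6, hM00]
    -- derivative bound constants
    set D1 : Fin n → ℝ := fun j => d j * ξ j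
      + (∑ k, (|aR j k| * (lRR k * ξ k + lRI k * φ k)
             + |(-(aI j k))| * (lIR k * ξ k + lII k * φ k)))
      + (∑ k, (|bR j k| * (mRR k * ξ k + mRI k * φ k)
             + |(-(bI j k))| * (mIR k * ξ k + mII k * φ k))) * Real.exp (ε * τbar) with hD1
    set D2 : Fin n → ℝ := fun j => d j * φ j
      + (∑ k, (|aR j k| * (lII k * φ k + lIR k * ξ k)
             + |aI j k| * (lRI k * φ k + lRR k * ξ k)))
      + (∑ k, (|bR j k| * (mII k * φ k + mIR k * ξ k)
             + |bI j k| * (mRI k * φ k + mRR k * ξ k))) * Real.exp (ε * τbar) with hD2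
    have hD10 : ∀ j, 0 ≤ D1 j := by
      intro j
      rw [hD1]
      have hd' := (hd j).le
      refine add_nonneg (add_nonneg (mul_nonneg hd' (hξ j).le) ?_)
        (mul_nonneg ?_ (Real.exp_nonneg _))
      · refine Finset.sum_nonneg (fun k _ => add_nonneg ?_ ?_) <;>
          refine mul_nonneg (abs_nonneg _) (add_nonneg ?_ ?_) <;>
          apply mul_nonneg
        · exact (hl k).1.le
        · exact (hξ k).le
        · exact (hl k).2.1.le
        · exact (hφ k).le
        · exact (hl k).2.2.1.le
        · exact (hξ k).le
        · exact (hl k).2.2.2.le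
        · exact (hφ k).le
      · refine Finset.sum_nonneg (fun k _ => add_nonneg ?_ ?_) <;>
          refine mul_nonneg (abs_nonneg _) (add_nonneg ?_ ?_) <;>
          apply mul_nonneg
        · exact (hm k).1.le
        · exact (hξ k).le
        · exact (hm k).2.1.le
        · exact (hφ k).le
        · exact (hm k).2.2.1.le
        · exact (hξ k).le
        · exact (hm k).2.2.2.le
        · exact (hφ k).le
    have hD20 : ∀ j, 0 ≤ D2 j := by
      intro j
      rw [hD2]
      have hd' := (hd j).le
      refine add_nonneg (add_nonneg (mul_nonneg hd' (hφ j).le) ?_)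
        (mul_nonneg ?_ (Real.exp_nonneg _))
      · refine Finset.sum_nonneg (fun k _ => add_nonneg ?_ ?_) <;>
          refine mul_nonneg (abs_nonneg _) (add_nonneg ?_ ?_) <;>
          apply mul_nonneg
        · exact (hl k).2.2.2.le
        · exact (hφ k).le
        · exact (hl k).2.2.1.le
        · exact (hξ k).le
        · exact (hl k).2.1.le
        · exact (hφ k).le
        · exact (hl k).1.le
        · exact (hξ k).le
      · refine Finset.sum_nonneg (fun k _ => add_nonneg ?_ ?_) <;>
          refine mul_nonneg (abs_nonneg _) (add_nonneg ?_ ?_) <;>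
          apply mul_nonneg
        · exact (hm k).2.2.2.le
        · exact (hφ k).le
        · exact (hm k).2.2.1.le
        · exact (hξ k).le
        · exact (hm k).2.1.le
        · exact (hφ k).le
        · exact (hm k).1.le
        · exact (hξ k).le
    -- bounds for the arguments of estd
    have hXc : ∀ t, 0 ≤ t → ∀ k, |zR k t - zbR k| ≤ ξ k * (M0 * Real.exp (-ε * t)) :=
      fun t ht k => inv_bound (hξ k) (hext t (by linarith) k).1
    have hYc : ∀ t, 0 ≤ t → ∀ k, |zI k t - zbI k| ≤ φ k * (M0 * Real.exp (-ε * t)) :=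
      fun t ht k => inv_bound (hφ k) (hext t (by linarith) k).2
    have hdelayed : ∀ t, 0 ≤ t → ∀ j k,
        M0 * Real.exp (-ε * (t - τ j k)) ≤ M0 * Real.exp (-ε * t) * Real.exp (ε * τbar) := by
      intro t ht j k
      have h1 : Real.exp (-ε * (t - τ j k)) = Real.exp (-ε * t) * Real.exp (ε * τ j k) := by
        rw [← Real.exp_add]; ring_nf
      have h2 : Real.exp (ε * τ j k) ≤ Real.exp (ε * τbar) :=
        Real.exp_le_exp.2 (mul_le_mul_of_nonneg_left (hτbarb j k) hε.le)
      rw [h1]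
      have h3 := mul_le_mul_of_nonneg_left h2 (Real.exp_nonneg (-ε * t))
      nlinarith [h3, hM00]
    have hXdc : ∀ t, 0 ≤ t → ∀ j k, |zR k (t - τ j k) - zbR k|
        ≤ ξ k * (M0 * Real.exp (-ε * t) * Real.exp (ε * τbar)) := by
      intro t ht j k
      have h0 := inv_bound (hξ k) (hext (t - τ j k) (by have := hτbarb j k; linarith) k).1
      exact le_trans h0 (mul_le_mul_of_nonneg_left (hdelayed t ht j k) (hξ k).le)
    have hYdc : ∀ t, 0 ≤ t → ∀ j k, |zI k (t - τ j k) - zbI k|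
        ≤ φ k * (M0 * Real.exp (-ε * t) * Real.exp (ε * τbar)) := by
      intro t ht j k
      have h0 := inv_bound (hφ k) (hext (t - τ j k) (by have := hτbarb j k; linarith) k).2
      exact le_trans h0 (mul_le_mul_of_nonneg_left (hdelayed t ht j k) (hφ k).le)
    have hQnn : ∀ t : ℝ, 0 ≤ M0 * Real.exp (-ε * t) :=
      fun t => mul_nonneg hM00 (Real.exp_nonneg _)
    have hl0 : ∀ k, 0 ≤ lRR k ∧ 0 ≤ lRI k ∧ 0 ≤ lIR k ∧ 0 ≤ lII k := fun k =>
      ⟨(hl k).1.le, (hl k).2.1.le, (hl k).2.2.1.le, (hl k).2.2.2.le⟩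
    have hm0 : ∀ k, 0 ≤ mRR k ∧ 0 ≤ mRI k ∧ 0 ≤ mIR k ∧ 0 ≤ mII k := fun k =>
      ⟨(hm k).1.le, (hm k).2.1.le, (hm k).2.2.1.le, (hm k).2.2.2.le⟩
    -- derivative bounds
    have hderR : ∀ t, 0 ≤ t → ∀ j,
        |deriv (zR j) t| ≤ D1 j * (M0 * Real.exp (-ε * t)) := by
      intro t ht j
      have hEqd : deriv (zR j) t
          = -(d j) * (zR j t - zbR j)
          + (∑ k, (aR j k * (fR k (zR k t) (zI k t) - fR k (zbR k) (zbI k))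
                 + -(aI j k) * (fI k (zR k t) (zI k t) - fI k (zbR k) (zbI k))))
          + (∑ k, (bR j k * (gR k (zR k (t - τ j k)) (zI k (t - τ j k)) - gR k (zbR k) (zbI k))
                 + -(bI j k) * (gI k (zR k (t - τ j k)) (zI k (t - τ j k))
                                - gI k (zbR k) (zbI k)))) := by
        rw [hz.2.2.1 j t ht]
        have hb := heqbar.1 j
        have e1 : (∑ k, (aR j k * fR k (zR k t) (zI k t) - aI j k * fI k (zR k t) (zI k t)))
            - (∑ k, (aR j k * fR k (zbR k) (zbI k) - aI j k * fI k (zbR k) (zbI k)))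
            = ∑ k, (aR j k * (fR k (zR k t) (zI k t) - fR k (zbR k) (zbI k))
                 + -(aI j k) * (fI k (zR k t) (zI k t) - fI k (zbR k) (zbI k))) := by
          rw [← Finset.sum_sub_distrib]
          exact Finset.sum_congr rfl (fun k _ => by ring)
        have e2 : (∑ k, (bR j k * gR k (zR k (t - τ j k)) (zI k (t - τ j k))
                        - bI j k * gI k (zR k (t - τ j k)) (zI k (t - τ j k))))
            - (∑ k, (bR j k * gR k (zbR k) (zbI k) - bI j k * gI k (zbR k) (zbI k)))
            = ∑ k, (bR j k * (gR k (zR k (t - τ j k)) (zI k (t - τ j k)) - gR k (zbR k) (zbI k))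
                 + -(bI j k) * (gI k (zR k (t - τ j k)) (zI k (t - τ j k))
                                - gI k (zbR k) (zbI k))) := by
          rw [← Finset.sum_sub_distrib]
          exact Finset.sum_congr rfl (fun k _ => by ring)
        linarith [e1, e2, hb]
      rw [hEqd, hD1]
      exact estd j ξ φ hξ hφ (d j) (hd j).le (aR j) (fun k => -(aI j k)) (bR j)
        (fun k => -(bI j k)) fR fI gR gI lRR lRI lIR lII mRR mRI mIR mII hl0 hm0
        hfRlip hfIlip hgRlip hgIlip
        (fun k => zR k t) (fun k => zI k t) (fun k => zbR k) (fun k => zbI k)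
        (fun k => zR k (t - τ j k)) (fun k => zI k (t - τ j k))
        (fun k => zbR k) (fun k => zbI k)
        (M0 * Real.exp (-ε * t)) (Real.exp (ε * τbar)) (hQnn t) (Real.exp_nonneg _)
        (hXc t ht) (hYc t ht) (hXdc t ht j) (hYdc t ht j)
    have hderI : ∀ t, 0 ≤ t → ∀ j,
        |deriv (zI j) t| ≤ D2 j * (M0 * Real.exp (-ε * t)) := by
      intro t ht j
      have hEqd : deriv (zI j) t
          = -(d j) * (zI j t - zbI j)
          + (∑ k, (aR j k * (fI k (zR k t) (zI k t) - fI k (zbR k) (zbI k))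
                 + aI j k * (fR k (zR k t) (zI k t) - fR k (zbR k) (zbI k))))
          + (∑ k, (bR j k * (gI k (zR k (t - τ j k)) (zI k (t - τ j k)) - gI k (zbR k) (zbI k))
                 + bI j k * (gR k (zR k (t - τ j k)) (zI k (t - τ j k))
                             - gR k (zbR k) (zbI k)))) := by
        rw [hz.2.2.2 j t ht]
        have hb := heqbar.2 j
        have e1 : (∑ k, (aR j k * fI k (zR k t) (zI k t) + aI j k * fR k (zR k t) (zI k t)))
            - (∑ k, (aR j k * fI k (zbR k) (zbI k) + aI j k * fR k (zbR k) (zbI k)))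
            = ∑ k, (aR j k * (fI k (zR k t) (zI k t) - fI k (zbR k) (zbI k))
                 + aI j k * (fR k (zR k t) (zI k t) - fR k (zbR k) (zbI k))) := by
          rw [← Finset.sum_sub_distrib]
          exact Finset.sum_congr rfl (fun k _ => by ring)
        have e2 : (∑ k, (bR j k * gI k (zR k (t - τ j k)) (zI k (t - τ j k))
                        + bI j k * gR k (zR k (t - τ j k)) (zI k (t - τ j k))))
            - (∑ k, (bR j k * gI k (zbR k) (zbI k) + bI j k * gR k (zbR k) (zbI k)))
            = ∑ k, (bR j k * (gI k (zR k (t - τ j k)) (zI k (t - τ j k)) - gI k (zbR k) (zbI k))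
                 + bI j k * (gR k (zR k (t - τ j k)) (zI k (t - τ j k))
                             - gR k (zbR k) (zbI k))) := by
          rw [← Finset.sum_sub_distrib]
          exact Finset.sum_congr rfl (fun k _ => by ring)
        linarith [e1, e2, hb]
      rw [hEqd, hD2]
      exact estd j φ ξ hφ hξ (d j) (hd j).le (aR j) (aI j) (bR j) (bI j)
        (fun k x y => fI k y x) (fun k x y => fR k y x)
        (fun k x y => gI k y x) (fun k x y => gR k y x)
        lII lIR lRI lRR mII mIR mRI mRR
        (fun k => ⟨(hl0 k).2.2.2, (hl0 k).2.2.1, (hl0 k).2.1, (hl0 k).1⟩)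
        (fun k => ⟨(hm0 k).2.2.2, (hm0 k).2.2.1, (hm0 k).2.1, (hm0 k).1⟩)
        (fun k x y x' y' => by have := hfIlip k y x y' x'; linarith)
        (fun k x y x' y' => by have := hfRlip k y x y' x'; linarith)
        (fun k x y x' y' => by have := hgIlip k y x y' x'; linarith)
        (fun k x y x' y' => by have := hgRlip k y x y' x'; linarith)
        (fun k => zI k t) (fun k => zR k t) (fun k => zbI k) (fun k => zbR k)
        (fun k => zI k (t - τ j k)) (fun k => zR k (t - τ j k))
        (fun k => zbI k) (fun k => zbR k)
        (M0 * Real.exp (-ε * t)) (Real.exp (ε * τbar)) (hQnn t) (Real.exp_nonneg _)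
        (hYc t ht) (hXc t ht) (hYdc t ht j) (hXdc t ht j)
    -- assemble the constant
    set S : ℝ := ∑ j, ((ξ j)⁻¹ * D1 j + (φ j)⁻¹ * D2 j) with hSdef
    have hS0 : 0 ≤ S := Finset.sum_nonneg (fun j _ => add_nonneg
      (mul_nonneg (inv_pos.2 (hξ j)).le (hD10 j))
      (mul_nonneg (inv_pos.2 (hφ j)).le (hD20 j)))
    have hsingle : ∀ j, (ξ j)⁻¹ * D1 j ≤ S ∧ (φ j)⁻¹ * D2 j ≤ S := by
      intro j
      have h1 : (ξ j)⁻¹ * D1 j + (φ j)⁻¹ * D2 j ≤ S := by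
        rw [hSdef]
        exact Finset.single_le_sum (f := fun j => (ξ j)⁻¹ * D1 j + (φ j)⁻¹ * D2 j)
          (fun i _ => add_nonneg (mul_nonneg (inv_pos.2 (hξ i)).le (hD10 i))
            (mul_nonneg (inv_pos.2 (hφ i)).le (hD20 i))) (mem_univ j)
      constructor
      · nlinarith [mul_nonneg (inv_pos.2 (hφ j)).le (hD20 j)]
      · nlinarith [mul_nonneg (inv_pos.2 (hξ j)).le (hD10 j)]
    refine ⟨1 + M0 * (1 + S), by nlinarith [hM00, hS0], fun t ht => ⟨?_, ?_, ?_, ?_⟩⟩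
    · intro j
      have h1 := (hkey t ht j).1
      have h2 : M0 ≤ 1 + M0 * (1 + S) := by nlinarith [hM00, hS0]
      have h3 := mul_le_mul_of_nonneg_right h2 (Real.exp_nonneg (-ε * t))
      exact le_trans h1 h3
    · intro j
      have h1 := (hkey t ht j).2
      have h2 : M0 ≤ 1 + M0 * (1 + S) := by nlinarith [hM00, hS0]
      have h3 := mul_le_mul_of_nonneg_right h2 (Real.exp_nonneg (-ε * t))
      exact le_trans h1 h3
    · intro j
      have h1 := mul_le_mul_of_nonneg_left (hderR t ht j) (inv_pos.2 (hξ j)).le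
      have h2 := mul_le_mul_of_nonneg_right (hsingle j).1 (hQnn t)
      have h4 : S * M0 ≤ 1 + M0 * (1 + S) := by nlinarith [hM00, hS0]
      have h5 := mul_le_mul_of_nonneg_right h4 (Real.exp_nonneg (-ε * t))
      rw [← mul_assoc] at h1
      have h6 : S * (M0 * Real.exp (-ε * t)) = S * M0 * Real.exp (-ε * t) := by
        rw [mul_assoc]
      exact le_trans h1 (le_trans h2 (le_trans (le_of_eq h6) h5))
    · intro j
      have h1 := mul_le_mul_of_nonneg_left (hderI t ht j) (inv_pos.2 (hφ j)).le
      have h2 := mul_le_mul_of_nonneg_right (hsingle j).2 (hQnn t)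
      have h4 : S * M0 ≤ 1 + M0 * (1 + S) := by nlinarith [hM00, hS0]
      have h5 := mul_le_mul_of_nonneg_right h4 (Real.exp_nonneg (-ε * t))
      rw [← mul_assoc] at h1
      have h6 : S * (M0 * Real.exp (-ε * t)) = S * M0 * Real.exp (-ε * t) := by
        rw [mul_assoc]
      exact le_trans h1 (le_trans h2 (le_trans (le_of_eq h6) h5))
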